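/- Let f be an n-bit partial Boolean function and let G_b be the two-party index gadget with b = O(log n). Then R^cc(f ∘ G_b) = Ω( R₀^cc(f_usab ∘ G'_b) / (log n · log log n) ), where G'_b is the index gadget with Bob's alphabet {0,1,*,†}. -/

import Mathlib

/-! ### Decision trees -/

/-- A deterministic decision tree querying positions of type `ι`, receiving answers
in `α`, and producing an output in `β`. -/
inductive DTree (ι α β : Type) : Type
  | leaf (b : β) : DTree ι α β
  | node (i : ι) (next : α → DTree ι α β) : DTree ι α β

namespace DTree

variable {ι α β : Type}

/-- The output of a decision tree on input `x`. -/
def output : DTree ι α β → (ι → α) → β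
  | leaf b, _ => b
  | node i next, x => (next (x i)).output x

/-- The number of queries made by a decision tree on input `x`. -/
def cost : DTree ι α β → (ι → α) → ℕ
  | leaf _, _ => 0
  | node i next, x => (next (x i)).cost x + 1

/-- The set of positions queried by a decision tree on input `x`. -/
def queries : DTree ι α β → (ι → α) → Set ι
  | leaf _, _ => ∅
  | node i next, x => insert i ((next (x i)).queries x)

end DTree

/-- A partial function on inputs `ι → α` with outputs in `β`; `none` means undefined
(the domain is the set of inputs mapped to `some` value). -/
abbrev PFn (ι α β : Type) := (ι → α) → Option β

/-- `t` computes the partial function `f` (correct on every input of the domain). -/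
def DTree.computesP {ι α β : Type} (t : DTree ι α β) (f : PFn ι α β) : Prop :=
  ∀ x b, f x = some b → t.output x = b

/-- Deterministic query complexity `D(f)`. -/
noncomputable def Dq {ι α β : Type} (f : PFn ι α β) : ℝ :=
  sInf {T : ℝ | 0 ≤ T ∧ ∃ t : DTree ι α β, t.computesP f ∧ ∀ x, (t.cost x : ℝ) ≤ T}

/-! ### Randomized query algorithms -/

/-- A randomized query algorithm: a finitely supported probability distribution over
deterministic decision trees. -/
structure RandAlg (ι α β : Type) where
  Ω : Type
  [fin : Fintype Ω]
  p : Ω → ℝ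
  nonneg : ∀ ω, 0 ≤ p ω
  sum_one : ∑ ω, p ω = 1
  tree : Ω → DTree ι α β

namespace RandAlg

variable {ι α β : Type}

/-- Expected number of queries of `A` on input `x`. -/
noncomputable def expCost (A : RandAlg ι α β) (x : ι → α) : ℝ :=
  letI := A.fin
  ∑ ω, A.p ω * ((A.tree ω).cost x : ℝ)

open Classical in
/-- Probability that `A` outputs `b` on input `x`. -/
noncomputable def succProb (A : RandAlg ι α β) (x : ι → α) (b : β) : ℝ :=
  letI := A.fin
  ∑ ω, if (A.tree ω).output x = b then A.p ω else 0

/-- `A` computes `f` with error at most `ε`: on every input of the domain the correct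
output is produced with probability at least `1 - ε`. -/
def Computes (A : RandAlg ι α β) (f : PFn ι α β) (ε : ℝ) : Prop :=
  ∀ x b, f x = some b → 1 - ε ≤ A.succProb x b

/-- The worst-case cost of `A` (over all inputs and all trees in the support) is at most `T`. -/
def WCostLe (A : RandAlg ι α β) (T : ℝ) : Prop :=
  ∀ ω, A.p ω ≠ 0 → ∀ x, ((A.tree ω).cost x : ℝ) ≤ T

/-- The expected cost of `A` on every input of the domain of `f` is at most `T`. -/
def ECostLe (A : RandAlg ι α β) (f : PFn ι α β) (T : ℝ) : Prop :=
  ∀ x, (f x).isSome → A.expCost x ≤ T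

end RandAlg

/-- `R_ε(f)`: minimum worst-case cost of an `ε`-error randomized algorithm for `f`. -/
noncomputable def Rw {ι α β : Type} (ε : ℝ) (f : PFn ι α β) : ℝ :=
  sInf {T : ℝ | 0 ≤ T ∧ ∃ A : RandAlg ι α β, A.Computes f ε ∧ A.WCostLe T}

/-- `R̄_ε(f)`: minimum expected cost of an `ε`-error randomized algorithm for `f`. -/
noncomputable def Rbar {ι α β : Type} (ε : ℝ) (f : PFn ι α β) : ℝ :=
  sInf {T : ℝ | 0 ≤ T ∧ ∃ A : RandAlg ι α β, A.Computes f ε ∧ A.ECostLe f T}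

/-- `R₀(f)`: zero-error expected randomized query complexity. -/
noncomputable def R0 {ι α β : Type} (f : PFn ι α β) : ℝ := Rbar 0 f

/-- `R(f) := R_{1/3}(f)`: bounded-error randomized query complexity. -/
noncomputable def Rb {ι α β : Type} (f : PFn ι α β) : ℝ := Rw (1/3) f

/-- The total function `f` viewed as a partial function. -/
def tot {ι α β : Type} (f : (ι → α) → β) : PFn ι α β := fun x => some (f x)


/-! ### Sabotage complexity and composition -/

/-- The four-letter alphabet `{0, 1, *, †}` of sabotaged inputs. -/
inductive Sab : Type
  | zero : Sab
  | one : Sab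
  | star : Sab
  | dagger : Sab
deriving DecidableEq

/-- Embedding of Boolean values into the sabotage alphabet. -/
def Sab.ofBool : Bool → Sab
  | false => Sab.zero
  | true => Sab.one

/-- `p` is consistent with the Boolean input `x`: wherever `p` has a Boolean entry,
it agrees with `x`. -/
def SabConsistent {ι : Type} (p : ι → Sab) (x : ι → Bool) : Prop :=
  ∀ i, p i = Sab.ofBool (x i) ∨ p i = Sab.star ∨ p i = Sab.dagger

/-- `p` is a sabotaged input for `f` using the sabotage symbol `s`: all entries of `p`
lie in `{0, 1, s}` and `p` is consistent with both a `0`-input and a `1`-input of `f`. -/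
def IsSabotaged {ι : Type} (f : PFn ι Bool Bool) (s : Sab) (p : ι → Sab) : Prop :=
  (∀ i, p i = Sab.zero ∨ p i = Sab.one ∨ p i = s) ∧
  ∃ x y, (f x).isSome ∧ (f y).isSome ∧ f x ≠ f y ∧ SabConsistent p x ∧ SabConsistent p y

open Classical in
/-- The sabotage problem `f_sab` associated with `f`: it is `0` on `P_f` (inputs
sabotaged with `*`) and `1` on `P_f†` (inputs sabotaged with `†`). -/
noncomputable def fsab {ι : Type} (f : PFn ι Bool Bool) : PFn ι Sab Bool :=
  fun p =>
    if IsSabotaged f Sab.star p then some false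
    else if IsSabotaged f Sab.dagger p then some true
    else none

open Classical in
/-- `f_usab`: the restriction of `f_sab` to inputs having exactly one `*` or `†` entry. -/
noncomputable def fusab {ι : Type} (f : PFn ι Bool Bool) : PFn ι Sab Bool :=
  fun p =>
    if ∃! i, p i = Sab.star ∨ p i = Sab.dagger then fsab f p else none

/-- Randomized sabotage complexity `RS(f) := R₀(f_sab)`. -/
noncomputable def RS {ι : Type} (f : PFn ι Bool Bool) : ℝ := R0 (fsab f)

/-- `RS_u(f) := R₀(f_usab)` (this is `0` automatically when `f_usab` has empty domain). -/
noncomputable def RSu {ι : Type} (f : PFn ι Bool Bool) : ℝ := R0 (fusab f)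

open Classical in
/-- Composition `f ∘ g` of partial functions: defined on an input exactly when every
inner copy of `g` is defined and the tuple of inner values lies in the domain of `f`. -/
noncomputable def pcomp {κ ι α β γ : Type} (f : PFn κ β γ) (g : PFn ι α β) :
    PFn (κ × ι) α γ :=
  fun x =>
    if h : ∀ i : κ, (g fun j => x (i, j)).isSome then
      f fun i => (g fun j => x (i, j)).get (h i)
    else none

/-- Index types for iterated self-composition. -/
def IterIdx (κ : Type) : ℕ → Type
  | 0 => κ
  | n + 1 => κ × IterIdx κ n

/-- `iterComp f n` is `f` composed with itself `n + 1` times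
(`iterComp f 0 = f`, `iterComp f (n+1) = f ∘ iterComp f n`). -/
noncomputable def iterComp {κ : Type} (f : PFn κ Bool Bool) : (n : ℕ) → PFn (IterIdx κ n) Bool Bool
  | 0 => f
  | n + 1 => pcomp f (iterComp f n)

/-! ### The index function -/

/-- The value of a bit-string read as a binary number (bit `i` has weight `2^i`). -/
def binval {b : ℕ} (x : Fin b → Bool) : ℕ := ∑ i, if x i then 2 ^ (i : ℕ) else 0

theorem sum_range_two_pow (b : ℕ) : ∑ i ∈ Finset.range b, 2 ^ i = 2 ^ b - 1 := by
  induction b with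
  | zero => simp
  | succ n ih =>
    rw [Finset.sum_range_succ, ih, pow_succ]
    have : 1 ≤ 2 ^ n := Nat.one_le_two_pow
    omega

theorem binval_lt {b : ℕ} (x : Fin b → Bool) : binval x < 2 ^ b := by
  have h1 : binval x ≤ ∑ i : Fin b, 2 ^ (i : ℕ) := by
    refine Finset.sum_le_sum fun i _ => ?_
    split <;> simp
  have h2 : ∑ i : Fin b, 2 ^ (i : ℕ) = 2 ^ b - 1 := by
    rw [Fin.sum_univ_eq_sum_range (fun i => 2 ^ i) b]
    exact sum_range_two_pow b
  have h3 : 0 < 2 ^ b := Nat.pow_pos (by norm_num)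
  omega

/-- The largest `c` with `c + 2^c ≤ m`. -/
def indexC (m : ℕ) : ℕ := Nat.findGreatest (fun c => c + 2 ^ c ≤ m) m

/-- The index function `Ind_m : {0,1}^m → {0,1}`: the first `c` bits (where `c` is the
largest integer with `c + 2^c ≤ m`) are read as a binary address `y` into the next
`2^c` bits, and the output is the addressed bit. -/
def IndFn (m : ℕ) : PFn (Fin m) Bool Bool :=
  fun x =>
    let c := indexC m
    let y := ∑ i : Fin m, if (i : ℕ) < c ∧ x i = true then 2 ^ (i : ℕ) else 0
    if h : c + y < m then some (x ⟨c + y, h⟩) else none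

/-- `f^{⊕c}_ind`: the index function on `c + 2^c` bits with `f` composed into each of
the `c` address bits only. -/
def findex {n : ℕ} (f : PFn (Fin n) Bool Bool) (c : ℕ) :
    PFn ((Fin c × Fin n) ⊕ Fin (2 ^ c)) Bool Bool :=
  fun x =>
    if h : ∀ i : Fin c, (f fun j => x (Sum.inl (i, j))).isSome then
      some (x (Sum.inr ⟨binval fun i => (f fun j => x (Sum.inl (i, j))).get (h i),
        binval_lt _⟩))
    else none

/-! ### Communication complexity -/

/-- A deterministic two-party communication protocol: at each internal node, one of
the players sends one bit computed from their own input. -/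
inductive Prot (X Y Z : Type) : Type
  | leaf (z : Z) : Prot X Y Z
  | anode (msg : X → Bool) (next : Bool → Prot X Y Z) : Prot X Y Z
  | bnode (msg : Y → Bool) (next : Bool → Prot X Y Z) : Prot X Y Z

namespace Prot

variable {X Y Z : Type}

/-- The output of a protocol on the input pair `(x, y)`. -/
def run : Prot X Y Z → X → Y → Z
  | leaf z, _, _ => z
  | anode msg next, x, y => (next (msg x)).run x y
  | bnode msg next, x, y => (next (msg y)).run x y

/-- The number of bits communicated by a protocol on the input pair `(x, y)`. -/
def cost : Prot X Y Z → X → Y → ℕ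
  | leaf _, _, _ => 0
  | anode msg next, x, y => (next (msg x)).cost x y + 1
  | bnode msg next, x, y => (next (msg y)).cost x y + 1

end Prot

/-- A (possibly partial) two-party communication problem. -/
abbrev CFn (X Y Z : Type) := X → Y → Option Z

/-- A randomized communication protocol: a finitely supported probability
distribution over deterministic protocols. -/
structure RandProt (X Y Z : Type) where
  Ω : Type
  [fin : Fintype Ω]
  p : Ω → ℝ
  nonneg : ∀ ω, 0 ≤ p ω
  sum_one : ∑ ω, p ω = 1
  prot : Ω → Prot X Y Z

namespace RandProt

variable {X Y Z : Type}

/-- Expected communication of `P` on the input pair `(x, y)`. -/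
noncomputable def expCost (P : RandProt X Y Z) (x : X) (y : Y) : ℝ :=
  letI := P.fin
  ∑ ω, P.p ω * ((P.prot ω).cost x y : ℝ)

open Classical in
/-- Probability that `P` outputs `z` on the input pair `(x, y)`. -/
noncomputable def succProb (P : RandProt X Y Z) (x : X) (y : Y) (z : Z) : ℝ :=
  letI := P.fin
  ∑ ω, if (P.prot ω).run x y = z then P.p ω else 0

/-- `P` computes `F` with error at most `ε` on every input of the domain. -/
def Computes (P : RandProt X Y Z) (F : CFn X Y Z) (ε : ℝ) : Prop :=
  ∀ x y z, F x y = some z → 1 - ε ≤ P.succProb x y z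

/-- The worst-case communication of `P` is at most `T`. -/
def WCostLe (P : RandProt X Y Z) (T : ℝ) : Prop :=
  ∀ ω, P.p ω ≠ 0 → ∀ x y, ((P.prot ω).cost x y : ℝ) ≤ T

/-- The expected communication of `P` on every domain input is at most `T`. -/
def ECostLe (P : RandProt X Y Z) (F : CFn X Y Z) (T : ℝ) : Prop :=
  ∀ x y, (F x y).isSome → P.expCost x y ≤ T

end RandProt

/-- `R^cc(F)`: bounded-error (error `1/3`) randomized communication complexity. -/
noncomputable def Rcc {X Y Z : Type} (F : CFn X Y Z) : ℝ :=
  sInf {T : ℝ | 0 ≤ T ∧ ∃ P : RandProt X Y Z, P.Computes F (1/3) ∧ P.WCostLe T}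

/-- `R₀^cc(F)`: zero-error expected randomized communication complexity. -/
noncomputable def R0cc {X Y Z : Type} (F : CFn X Y Z) : ℝ :=
  sInf {T : ℝ | 0 ≤ T ∧ ∃ P : RandProt X Y Z, P.Computes F 0 ∧ P.ECostLe F T}

/-- The lifted communication problem `f ∘ G`: Alice gets `(x₁, …, xₙ)`, Bob gets
`(y₁, …, yₙ)`, and they must compute `f(G(x₁,y₁), …, G(xₙ,yₙ))`. -/
def gcomp {n : ℕ} {X Y σ β : Type} (f : PFn (Fin n) σ β) (G : X → Y → σ) :
    CFn (Fin n → X) (Fin n → Y) β :=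
  fun xs ys => f fun i => G (xs i) (ys i)

/-- The two-party index gadget on pointers of `b` bits, with array alphabet `σ`:
Alice holds a `b`-bit pointer, Bob holds an array of `2^b` symbols, and the gadget
evaluates to the symbol of Bob's array addressed by Alice's pointer. -/
def IndG (b : ℕ) (σ : Type) : (Fin b → Bool) → (Fin (2 ^ b) → σ) → σ :=
  fun x y => y ⟨binval x, binval_lt x⟩



/-! ### Part 1: protocol combinators -/

attribute [instance] RandProt.fin RandAlg.fin

theorem two_mul_div_two_mod (v d : ℕ) : 2 * (v / 2 % 2 ^ d) + v % 2 = v % 2 ^ (d + 1) := by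
  have h : (2:ℕ) ^ (d + 1) = 2 * 2 ^ d := by ring
  have h1 : v % (2 * 2 ^ d) / 2 = v / 2 % 2 ^ d := Nat.mod_mul_right_div_self v 2 (2 ^ d)
  have h2 : v % (2 * 2 ^ d) % 2 = v % 2 := Nat.mod_mod_of_dvd v ⟨2 ^ d, rfl⟩
  rw [h, ← h1, ← h2]
  exact Nat.div_add_mod _ 2

namespace Prot

variable {X Y Z W X' Y' : Type}

/-- Sequential composition of protocols. -/
def bind : Prot X Y Z → (Z → Prot X Y W) → Prot X Y W
  | leaf z, g => g z
  | anode msg next, g => anode msg (fun c => (next c).bind g)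
  | bnode msg next, g => bnode msg (fun c => (next c).bind g)

@[simp] theorem run_bind (t : Prot X Y Z) (g : Z → Prot X Y W) (x : X) (y : Y) :
    (t.bind g).run x y = (g (t.run x y)).run x y := by
  induction t with
  | leaf z => rfl
  | anode msg next ih => simp [bind, run, ih]
  | bnode msg next ih => simp [bind, run, ih]

@[simp] theorem cost_bind (t : Prot X Y Z) (g : Z → Prot X Y W) (x : X) (y : Y) :
    (t.bind g).cost x y = t.cost x y + (g (t.run x y)).cost x y := by
  induction t with
  | leaf z => simp [bind, run, cost]
  | anode msg next ih => simp [bind, run, cost, ih]; omega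
  | bnode msg next ih => simp [bind, run, cost, ih]; omega

/-- Precompose Bob's input. -/
def compY (g : Y' → Y) : Prot X Y Z → Prot X Y' Z
  | leaf z => leaf z
  | anode msg next => anode msg (fun c => (next c).compY g)
  | bnode msg next => bnode (fun y' => msg (g y')) (fun c => (next c).compY g)

@[simp] theorem run_compY (g : Y' → Y) (t : Prot X Y Z) (x : X) (y' : Y') :
    (t.compY g).run x y' = t.run x (g y') := by
  induction t with
  | leaf z => rfl
  | anode msg next ih => simp [compY, run, ih]
  | bnode msg next ih => simp [compY, run, ih]

@[simp] theorem cost_compY (g : Y' → Y) (t : Prot X Y Z) (x : X) (y' : Y') :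
    (t.compY g).cost x y' = t.cost x (g y') := by
  induction t with
  | leaf z => rfl
  | anode msg next ih => simp [compY, run, cost, ih]
  | bnode msg next ih => simp [compY, run, cost, ih]

/-- Alice sends the low `d` bits of `v x`, then the protocol continues
with the continuation applied to the transmitted value. -/
def sendNat : (d : ℕ) → (v : X → ℕ) → (cont : ℕ → Prot X Y Z) → Prot X Y Z
  | 0, _, cont => cont 0
  | d + 1, v, cont =>
    anode (fun x => decide (v x % 2 = 1))
      (fun c => sendNat d (fun x => v x / 2)
        (fun m => cont (2 * m + (if c then 1 else 0))))

theorem sendNat_bit (v : ℕ) : (if decide (v % 2 = 1) then 1 else 0) = v % 2 := by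
  rcases Nat.mod_two_eq_zero_or_one v with h | h <;> simp [h]

theorem run_sendNat (d : ℕ) (v : X → ℕ) (cont : ℕ → Prot X Y Z) (x : X) (y : Y) :
    (sendNat d v cont).run x y = (cont (v x % 2 ^ d)).run x y := by
  induction d generalizing v cont with
  | zero => simp [sendNat, Nat.mod_one]
  | succ d ih =>
    simp only [sendNat, run, ih, sendNat_bit, two_mul_div_two_mod]

theorem cost_sendNat (d : ℕ) (v : X → ℕ) (cont : ℕ → Prot X Y Z) (x : X) (y : Y) :
    (sendNat d v cont).cost x y = (cont (v x % 2 ^ d)).cost x y + d := by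
  induction d generalizing v cont with
  | zero => simp [sendNat, Nat.mod_one]
  | succ d ih =>
    simp only [sendNat, cost, ih, sendNat_bit, two_mul_div_two_mod]
    omega

end Prot

/-! ### Full-communication protocol -/

open Classical in
/-- The trivial protocol: Alice sends her entire input, Bob replies with the answer. -/
noncomputable def fullProt (X Y : Type) [Fintype X] (F : X → Y → Bool) : Prot X Y Bool :=
  Prot.sendNat (Nat.clog 2 (Fintype.card X + 1))
    (fun x => (Fintype.equivFin X x : ℕ))
    (fun m => Prot.bnode
      (fun y => if h : m < Fintype.card X then F ((Fintype.equivFin X).symm ⟨m, h⟩) y else false)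
      (fun c => Prot.leaf c))

theorem run_fullProt {X Y : Type} [Fintype X] (F : X → Y → Bool) (x : X) (y : Y) :
    (fullProt X Y F).run x y = F x y := by
  classical
  rw [fullProt, Prot.run_sendNat]
  have hlt : ((Fintype.equivFin X x : ℕ)) < Fintype.card X := (Fintype.equivFin X x).2
  have hcard : Fintype.card X + 1 ≤ 2 ^ Nat.clog 2 (Fintype.card X + 1) :=
    Nat.le_pow_clog (by norm_num) _
  have hmod : (Fintype.equivFin X x : ℕ) % 2 ^ Nat.clog 2 (Fintype.card X + 1)
      = (Fintype.equivFin X x : ℕ) := Nat.mod_eq_of_lt (by omega)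
  simp [Prot.run, hmod, hlt]

theorem cost_fullProt {X Y : Type} [Fintype X] (F : X → Y → Bool) (x : X) (y : Y) :
    (fullProt X Y F).cost x y = Nat.clog 2 (Fintype.card X + 1) + 1 := by
  rw [fullProt, Prot.cost_sendNat]
  simp [Prot.cost]
  omega

/-! ### Part 2: sums over product spaces and a Chernoff bound -/

section Sums

variable {β : Type} [Fintype β]

theorem sum_pi_succ {m : ℕ} (F : (Fin (m + 1) → β) → ℝ) :
    ∑ g : Fin (m + 1) → β, F g = ∑ a : β, ∑ g : Fin m → β, F (Fin.cons a g) := by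
  rw [← (Fin.consEquiv (fun _ => β)).sum_comp F, Fintype.sum_prod_type]
  rfl

theorem sum_pi_prod_eq_pow (w : β → ℝ) (m : ℕ) :
    ∑ g : Fin m → β, ∏ i, w (g i) = (∑ a, w a) ^ m :=
  (Fintype.sum_pow w m).symm

theorem sum_pi_prod_eq_one (w : β → ℝ) (h1 : ∑ a, w a = 1) (m : ℕ) :
    ∑ g : Fin m → β, ∏ i, w (g i) = 1 := by
  rw [sum_pi_prod_eq_pow, h1, one_pow]

theorem prod_w_nonneg (w : β → ℝ) (hw : ∀ a, 0 ≤ w a) (g : Fin m → β) :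
    0 ≤ ∏ i, w (g i) := Finset.prod_nonneg fun i _ => hw _

/-- Chernoff-type bound: among `2r` independent samples, the probability that at
least `r` of them are "bad" is at most `(8/9)^r`, provided each is bad with
probability at most `1/3`. -/
theorem chernoff (w : β → ℝ) (hw : ∀ a, 0 ≤ w a) (h1 : ∑ a, w a = 1)
    (bad : β → Bool) (hb : (∑ a, if bad a then w a else 0) ≤ 1 / 3) (r : ℕ) :
    ∑ g : Fin (2 * r) → β,
      (∏ i, w (g i)) * (if r ≤ ∑ i, (if bad (g i) then 1 else 0) then (1:ℝ) else 0)
      ≤ (8 / 9 : ℝ) ^ r := by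
  have key : ∀ g : Fin (2 * r) → β,
      (∏ i, w (g i)) * (if r ≤ ∑ i, (if bad (g i) then 1 else 0) then (1:ℝ) else 0)
      ≤ (1 / 2 : ℝ) ^ r * ∏ i, (w (g i) * if bad (g i) then 2 else 1) := by
    intro g
    have hprod : ∏ i, (w (g i) * if bad (g i) then (2:ℝ) else 1)
        = (∏ i, w (g i)) * ∏ i, (if bad (g i) then (2:ℝ) else 1) := by
      rw [← Finset.prod_mul_distrib]
    rw [hprod]
    split
    · rename_i hr
      have h2 : (2:ℝ) ^ r ≤ ∏ i, (if bad (g i) then (2:ℝ) else 1) := by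
        have : ∏ i, (if bad (g i) then (2:ℝ) else 1)
            = 2 ^ (∑ i, if bad (g i) then 1 else 0) := by
          rw [← Finset.prod_pow_eq_pow_sum]
          congr 1; ext i; split <;> simp
        rw [this]
        exact pow_le_pow_right₀ (by norm_num) hr
      have hwnn : 0 ≤ ∏ i, w (g i) := prod_w_nonneg w hw g
      calc (∏ i, w (g i)) * 1 = ∏ i, w (g i) := mul_one _
        _ ≤ (1/2:ℝ)^r * ((2:ℝ)^r * ∏ i, w (g i)) := by
            rw [← mul_assoc, ← mul_pow]; norm_num
        _ ≤ (1/2:ℝ)^r * ((∏ i, (if bad (g i) then (2:ℝ) else 1)) * ∏ i, w (g i)) := by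
            apply mul_le_mul_of_nonneg_left _ (by positivity)
            exact mul_le_mul_of_nonneg_right h2 hwnn
        _ = (1/2:ℝ)^r * ((∏ i, w (g i)) * ∏ i, (if bad (g i) then (2:ℝ) else 1)) := by
            ring
    · have hwnn : 0 ≤ ∏ i, w (g i) := prod_w_nonneg w hw g
      have : 0 ≤ ∏ i, (if bad (g i) then (2:ℝ) else 1) :=
        Finset.prod_nonneg fun i _ => by split <;> norm_num
      rw [mul_zero]
      exact mul_nonneg (by positivity) (mul_nonneg hwnn this)
  calc ∑ g : Fin (2 * r) → β, (∏ i, w (g i)) *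
        (if r ≤ ∑ i, (if bad (g i) then 1 else 0) then (1:ℝ) else 0)
      ≤ ∑ g : Fin (2 * r) → β,
        (1 / 2 : ℝ) ^ r * ∏ i, (w (g i) * if bad (g i) then 2 else 1) :=
        Finset.sum_le_sum fun g _ => key g
    _ = (1 / 2 : ℝ) ^ r * ∑ g : Fin (2 * r) → β,
        ∏ i, (w (g i) * if bad (g i) then 2 else 1) := by
        rw [Finset.mul_sum]
    _ = (1 / 2 : ℝ) ^ r * (∑ a, w a * if bad a then 2 else 1) ^ (2 * r) := by
        rw [sum_pi_prod_eq_pow (fun a => w a * if bad a then 2 else 1)]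
    _ ≤ (8 / 9 : ℝ) ^ r := by
        have hsum : (∑ a, w a * if bad a then 2 else 1)
            = (∑ a, w a) + (∑ a, if bad a then w a else 0) := by
          rw [← Finset.sum_add_distrib]
          congr 1; ext a; split <;> ring
        have hle : (∑ a, w a * if bad a then 2 else 1) ≤ 4 / 3 := by
          rw [hsum, h1]; linarith
        have hge : (0:ℝ) ≤ ∑ a, w a * if bad a then 2 else 1 := by
          apply Finset.sum_nonneg; intro a _
          have := hw a; split <;> nlinarith
        calc (1 / 2 : ℝ) ^ r * (∑ a, w a * if bad a then 2 else 1) ^ (2 * r)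
            ≤ (1 / 2 : ℝ) ^ r * (4 / 3 : ℝ) ^ (2 * r) := by
              apply mul_le_mul_of_nonneg_left _ (by positivity)
              exact pow_le_pow_left₀ hge hle _
          _ = (8 / 9 : ℝ) ^ r := by
              rw [pow_mul, ← mul_pow]; norm_num
    
end Sums

/-! ### Part 3: structure of sabotaged inputs -/

/-- Is a symbol one of `*`, `†`? -/
def Sab.isSpecial : Sab → Bool
  | Sab.star => true
  | Sab.dagger => true
  | _ => false

/-- Complete a symbol to a Boolean, using `c` for special symbols. -/
def Sab.toBool : Sab → Bool → Bool
  | Sab.zero, _ => false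
  | Sab.one, _ => true
  | _, c => c

/-- Completion of a sabotaged input using the bits `c` at special positions. -/
def cmpl {n : ℕ} (p : Fin n → Sab) (c : Fin n → Bool) : Fin n → Bool :=
  fun i => (p i).toBool (c i)

theorem sab_ofBool_toBool (x : Bool) (c : Bool) : (Sab.ofBool x).toBool c = x := by
  cases x <;> rfl

theorem sab_ofBool_not_special (x : Bool) : (Sab.ofBool x).isSpecial = false := by
  cases x <;> rfl

theorem sab_special_iff (s : Sab) : s.isSpecial = true ↔ (s = Sab.star ∨ s = Sab.dagger) := by
  cases s <;> simp [Sab.isSpecial]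

/-- The key structure lemma for inputs in the domain of `f_usab`. -/
theorem fusab_structure {n : ℕ} (f : PFn (Fin n) Bool Bool) (p : Fin n → Sab) (z : Bool)
    (h : fusab f p = some z) :
    ∃ (i0 : Fin n) (z0 : Bool),
      (p i0).isSpecial = true ∧
      (∀ j, (p j).isSpecial = true → j = i0) ∧
      z = decide (p i0 = Sab.dagger) ∧
      (∀ c : Fin n → Bool, f (cmpl p c) = some (if c i0 then !z0 else z0)) := by
  classical
  rw [fusab] at h
  split at h
  case isFalse => exact absurd h (by simp)
  case isTrue hEx =>
    obtain ⟨i0, hi0, huniq⟩ := hEx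
    have huniq' : ∀ j, (p j).isSpecial = true → j = i0 := by
      intro j hj
      exact huniq j ((sab_special_iff _).mp hj)
    have hi0s : (p i0).isSpecial = true := (sab_special_iff _).mpr hi0
    -- extract sabotage witnesses
    rw [fsab] at h
    have main : ∀ s : Sab, IsSabotaged f s p →
        ∃ z0 : Bool, ∀ c : Fin n → Bool, f (cmpl p c) = some (if c i0 then !z0 else z0) := by
      intro s ⟨_, x, y, hx, hy, hne, hcx, hcy⟩
      -- any consistent input is a constant-completion
      have hconst : ∀ u : Fin n → Bool, SabConsistent p u → u = cmpl p (fun _ => u i0) := by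
        intro u hu
        funext j
        rcases hu j with hj | hj | hj
        · by_cases hjs : (p j).isSpecial = true
          · have := huniq' j hjs
            subst this
            rw [cmpl, hj, sab_ofBool_toBool]
          · rw [cmpl, hj, sab_ofBool_toBool]
        · have hjs : (p j).isSpecial = true := by rw [hj]; rfl
          have := huniq' j hjs; subst this
          rw [cmpl, hj]; rfl
        · have hjs : (p j).isSpecial = true := by rw [hj]; rfl
          have := huniq' j hjs; subst this
          rw [cmpl, hj]; rfl
      have hxe := hconst x hcx
      have hye := hconst y hcy
      have hne' : x i0 ≠ y i0 := by
        intro hxy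
        apply hne
        rw [hxe, hye, hxy]
      -- z0 : value of the completion by `false`
      rcases Option.isSome_iff_exists.mp hx with ⟨zx, hzx⟩
      rcases Option.isSome_iff_exists.mp hy with ⟨zy, hzy⟩
      have hzz : zx ≠ zy := by
        intro hzz; apply hne; rw [hzx, hzy, hzz]
      have hcases : ∀ c : Fin n → Bool, cmpl p c = cmpl p (fun _ => c i0) := by
        intro c; funext j
        by_cases hjs : (p j).isSpecial = true
        · have := huniq' j hjs; subst this; rfl
        · cases hpj : p j with
          | zero => simp [cmpl, hpj, Sab.toBool]
          | one => simp [cmpl, hpj, Sab.toBool]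
          | star => rw [hpj] at hjs; exact absurd rfl hjs
          | dagger => rw [hpj] at hjs; exact absurd rfl hjs
      cases hxi : x i0
      · refine ⟨zx, fun c => ?_⟩
        rw [hcases c]
        cases hci : c i0
        · rw [show (fun _ : Fin n => false) = (fun _ : Fin n => x i0) from funext fun _ => hxi.symm,
            ← hxe, hzx]
          simp
        · have hyi : y i0 = true := by
            cases hyi : y i0
            · exact absurd (hxi.trans hyi.symm) hne'
            · rfl
          rw [show (fun _ : Fin n => true) = (fun _ : Fin n => y i0) from funext fun _ => hyi.symm,
            ← hye, hzy]
          have : zy = !zx := by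
            cases zx <;> cases zy <;> first | rfl | exact absurd rfl hzz
          simp [this]
      · refine ⟨zy, fun c => ?_⟩
        rw [hcases c]
        have hyi : y i0 = false := by
          cases hyi : y i0
          · rfl
          · exact absurd (hxi.trans hyi.symm) hne'
        cases hci : c i0
        · rw [show (fun _ : Fin n => false) = (fun _ : Fin n => y i0) from funext fun _ => hyi.symm,
            ← hye, hzy]
          simp
        · rw [show (fun _ : Fin n => true) = (fun _ : Fin n => x i0) from funext fun _ => hxi.symm,
            ← hxe, hzx]
          have : zx = !zy := by
            cases zx <;> cases zy <;> first | rfl | exact absurd rfl hzz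
          simp [this]
    split at h
    case isTrue hS =>
      -- star case, z = false
      have hz : z = false := by simpa using h.symm
      have hstar : p i0 = Sab.star := by
        rcases hS.1 i0 with h0 | h0 | h0
        · rw [h0] at hi0s; simp [Sab.isSpecial] at hi0s
        · rw [h0] at hi0s; simp [Sab.isSpecial] at hi0s
        · exact h0
      obtain ⟨z0, hz0⟩ := main Sab.star hS
      exact ⟨i0, z0, hi0s, huniq', by simp [hz, hstar], hz0⟩
    case isFalse =>
      split at h
      case isFalse => exact absurd h (by simp)
      case isTrue hS =>
        have hz : z = true := by simpa using h.symm
        have hdag : p i0 = Sab.dagger := by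
          rcases hS.1 i0 with h0 | h0 | h0
          · rw [h0] at hi0s; simp [Sab.isSpecial] at hi0s
          · rw [h0] at hi0s; simp [Sab.isSpecial] at hi0s
          · exact h0
        obtain ⟨z0, hz0⟩ := main Sab.dagger hS
        exact ⟨i0, z0, hi0s, huniq', by simp [hz, hdag], hz0⟩

/-! ### Part 4: the zero-error search protocol -/

abbrev XA (n b : ℕ) : Type := Fin n → Fin b → Bool
abbrev YB (n b : ℕ) : Type := Fin n → Fin (2 ^ b) → Bool
abbrev YS (n b : ℕ) : Type := Fin n → Fin (2 ^ b) → Sab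

/-- The effective sabotaged input determined by a pair of gadget inputs. -/
def pOf {n b : ℕ} (x : XA n b) (y : YS n b) : Fin n → Sab := fun i => IndG b Sab (x i) (y i)

/-- Bob's Boolean completion of his arrays, switching specials at threshold `m`. -/
def ybarF (n b m : ℕ) (y : YS n b) : YB n b :=
  fun i j => (y i j).toBool (decide ((i : ℕ) < m))

theorem gadget_ybarF {n b : ℕ} (m : ℕ) (x : XA n b) (y : YS n b) :
    (fun i => IndG b Bool (x i) (ybarF n b m y i))
      = cmpl (pOf x y) (fun i => decide ((i : ℕ) < m)) := rfl

/-- Binary search state: `(lo, hi, believed value of f at the 0-completion)`. -/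
abbrev SSt : Type := ℕ × ℕ × Option Bool

def midOf (st : SSt) : ℕ := match st.2.2 with
  | none => 0
  | some _ => (st.1 + st.2.1) / 2

def updSt (st : SSt) (e : Bool) : SSt := match st with
  | (lo, hi, none) => (lo, hi, some e)
  | (lo, hi, some v) =>
      if hi ≤ lo + 1 then (lo, hi, some v)
      else if e = v then ((lo + hi) / 2, hi, some v) else (lo, (lo + hi) / 2, some v)

def candOf (st : SSt) : ℕ := st.1

/-- Run a list of protocols on the `m`-completion, counting `true` answers. -/
def cntRun (n b : ℕ) : List (Prot (XA n b) (YB n b) Bool) → ℕ → ℕ →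
    (ℕ → Prot (XA n b) (YS n b) Bool) → Prot (XA n b) (YS n b) Bool
  | [], _, acc, cont => cont acc
  | t :: ts, m, acc, cont =>
      (t.compY (ybarF n b m)).bind fun e => cntRun n b ts m (acc + if e then 1 else 0) cont

def pureCnt (n b : ℕ) : List (Prot (XA n b) (YB n b) Bool) → ℕ → XA n b → YS n b → ℕ
  | [], _, _, _ => 0
  | t :: ts, m, x, y => (if t.run x (ybarF n b m y) then 1 else 0) + pureCnt n b ts m x y

theorem run_cntRun (n b : ℕ) (ts : List (Prot (XA n b) (YB n b) Bool)) (m acc : ℕ)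
    (cont : ℕ → Prot (XA n b) (YS n b) Bool) (x : XA n b) (y : YS n b) :
    (cntRun n b ts m acc cont).run x y = (cont (acc + pureCnt n b ts m x y)).run x y := by
  induction ts generalizing acc with
  | nil => simp [cntRun, pureCnt]
  | cons t ts ih => simp [cntRun, pureCnt, ih, Nat.add_assoc]

theorem cost_cntRun_le (n b : ℕ) (ts : List (Prot (XA n b) (YB n b) Bool)) (m acc : ℕ)
    (cont : ℕ → Prot (XA n b) (YS n b) Bool) (x : XA n b) (y : YS n b) (T : ℝ)
    (hT : ∀ t ∈ ts, ∀ y' : YB n b, ((t.cost x y' : ℕ) : ℝ) ≤ T) :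
    ((cntRun n b ts m acc cont).cost x y : ℝ)
      ≤ ts.length * T + ((cont (acc + pureCnt n b ts m x y)).cost x y : ℝ) := by
  induction ts generalizing acc with
  | nil => simp [cntRun, pureCnt]
  | cons t ts ih =>
    simp only [cntRun, Prot.cost_bind, Prot.cost_compY, Prot.run_bind, Prot.run_compY,
      pureCnt, List.length_cons]
    push_cast
    have h1 := ih (acc + if t.run x (ybarF n b m y) then 1 else 0)
      (fun t ht => hT t (List.mem_cons_of_mem _ ht))
    have h2 := hT t (List.mem_cons_self) (ybarF n b m y)
    have heq : acc + (if t.run x (ybarF n b m y) then 1 else 0) + pureCnt n b ts m x y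
        = acc + ((if t.run x (ybarF n b m y) then 1 else 0) + pureCnt n b ts m x y) := by omega
    rw [heq] at h1
    push_cast at h1 h2
    linarith

/-- One amplified (majority-vote) estimate. -/
def estP (n b : ℕ) (ts : List (Prot (XA n b) (YB n b) Bool)) (m : ℕ)
    (cont : Bool → Prot (XA n b) (YS n b) Bool) : Prot (XA n b) (YS n b) Bool :=
  cntRun n b ts m 0 (fun cnt => cont (decide (ts.length < 2 * cnt)))

def pureEst (n b : ℕ) (ts : List (Prot (XA n b) (YB n b) Bool)) (m : ℕ)
    (x : XA n b) (y : YS n b) : Bool :=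
  decide (ts.length < 2 * pureCnt n b ts m x y)

theorem run_estP (n b : ℕ) (ts : List (Prot (XA n b) (YB n b) Bool)) (m : ℕ)
    (cont : Bool → Prot (XA n b) (YS n b) Bool) (x : XA n b) (y : YS n b) :
    (estP n b ts m cont).run x y = (cont (pureEst n b ts m x y)).run x y := by
  rw [estP, run_cntRun]; simp [pureEst]

theorem cost_estP_le (n b : ℕ) (ts : List (Prot (XA n b) (YB n b) Bool)) (m : ℕ)
    (cont : Bool → Prot (XA n b) (YS n b) Bool) (x : XA n b) (y : YS n b) (T : ℝ)
    (hT : ∀ t ∈ ts, ∀ y' : YB n b, ((t.cost x y' : ℕ) : ℝ) ≤ T) :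
    ((estP n b ts m cont).cost x y : ℝ)
      ≤ ts.length * T + ((cont (pureEst n b ts m x y)).cost x y : ℝ) := by
  have := cost_cntRun_le n b ts m 0 (fun cnt => cont (decide (ts.length < 2 * cnt))) x y T hT
  simpa [pureEst, estP] using this

/-- The verification phase: Alice announces the address of the candidate position,
Bob checks the symbol there. -/
def finishP (n b : ℕ) (c : ℕ) (fail : Prot (XA n b) (YS n b) Bool) :
    Prot (XA n b) (YS n b) Bool :=
  if h : c < n then
    Prot.sendNat b (fun x => binval (x ⟨c, h⟩)) (fun a =>
      Prot.bnode
        (fun y => (y ⟨c, h⟩ ⟨a % 2 ^ b, Nat.mod_lt _ (Nat.pow_pos (by norm_num))⟩).isSpecial)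
        (fun ok => if ok then
            Prot.bnode
              (fun y => decide
                (y ⟨c, h⟩ ⟨a % 2 ^ b, Nat.mod_lt _ (Nat.pow_pos (by norm_num))⟩ = Sab.dagger))
              (fun ans => Prot.leaf ans)
          else fail))
  else fail

def okAt (n b : ℕ) (c : ℕ) (x : XA n b) (y : YS n b) : Bool :=
  if h : c < n then (pOf x y ⟨c, h⟩).isSpecial else false

def symAt (n b : ℕ) (c : ℕ) (x : XA n b) (y : YS n b) : Sab :=
  if h : c < n then pOf x y ⟨c, h⟩ else Sab.zero

theorem run_finishP (n b : ℕ) (c : ℕ) (fail : Prot (XA n b) (YS n b) Bool)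
    (x : XA n b) (y : YS n b) :
    (finishP n b c fail).run x y
      = if okAt n b c x y then decide (symAt n b c x y = Sab.dagger) else fail.run x y := by
  rw [finishP, okAt, symAt]
  split
  case isFalse h => simp
  case isTrue h =>
    rw [Prot.run_sendNat]
    have hidx : (⟨binval (x ⟨c, h⟩) % 2 ^ b % 2 ^ b,
        Nat.mod_lt _ (Nat.pow_pos (by norm_num))⟩ : Fin (2 ^ b))
        = ⟨binval (x ⟨c, h⟩), binval_lt _⟩ := by
      apply Fin.ext
      simp [Nat.mod_eq_of_lt (binval_lt (x ⟨c, h⟩))]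
    simp only [Prot.run, hidx]
    have hp : pOf x y ⟨c, h⟩ = y ⟨c, h⟩ ⟨binval (x ⟨c, h⟩), binval_lt _⟩ := rfl
    rw [← hp]
    cases hspec : (pOf x y ⟨c, h⟩).isSpecial
    · simp [Prot.run, hspec]
    · simp [Prot.run, hspec]
      rw [hp]

theorem cost_finishP_le (n b : ℕ) (c : ℕ) (fail : Prot (XA n b) (YS n b) Bool)
    (x : XA n b) (y : YS n b) :
    ((finishP n b c fail).cost x y : ℝ)
      ≤ (b + 2) + (if okAt n b c x y then 0 else (fail.cost x y : ℝ)) := by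
  have hfc : (0:ℝ) ≤ (fail.cost x y : ℕ) := Nat.cast_nonneg _
  rw [finishP, okAt]
  split
  case isFalse h =>
    have hb : (0:ℝ) ≤ (b:ℝ) := Nat.cast_nonneg b
    simp only [Bool.false_eq_true, if_false]
    linarith
  case isTrue h =>
    rw [Prot.cost_sendNat]
    have hidx : (⟨binval (x ⟨c, h⟩) % 2 ^ b % 2 ^ b,
        Nat.mod_lt _ (Nat.pow_pos (by norm_num))⟩ : Fin (2 ^ b))
        = ⟨binval (x ⟨c, h⟩), binval_lt _⟩ := by
      apply Fin.ext
      simp [Nat.mod_eq_of_lt (binval_lt (x ⟨c, h⟩))]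
    simp only [Prot.cost, hidx]
    have hp : pOf x y ⟨c, h⟩ = y ⟨c, h⟩ ⟨binval (x ⟨c, h⟩), binval_lt _⟩ := rfl
    rw [← hp]
    cases hspec : (pOf x y ⟨c, h⟩).isSpecial <;> simp [Prot.cost] <;> push_cast <;> linarith

/-! ### Part 4b: the search loop and the attempt chain -/

def loopP (n b : ℕ) : List (List (Prot (XA n b) (YB n b) Bool)) → SSt →
    Prot (XA n b) (YS n b) Bool → Prot (XA n b) (YS n b) Bool
  | [], st, fail => finishP n b (candOf st) fail
  | ts :: rest, st, fail => estP n b ts (midOf st) (fun e => loopP n b rest (updSt st e) fail)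

def pureLoop (n b : ℕ) : List (List (Prot (XA n b) (YB n b) Bool)) → SSt →
    XA n b → YS n b → SSt
  | [], st, _, _ => st
  | ts :: rest, st, x, y => pureLoop n b rest (updSt st (pureEst n b ts (midOf st) x y)) x y

theorem run_loopP (n b : ℕ) (rows : List (List (Prot (XA n b) (YB n b) Bool))) (st : SSt)
    (fail : Prot (XA n b) (YS n b) Bool) (x : XA n b) (y : YS n b) :
    (loopP n b rows st fail).run x y
      = (finishP n b (candOf (pureLoop n b rows st x y)) fail).run x y := by
  induction rows generalizing st with
  | nil => rfl
  | cons ts rest ih => rw [loopP, run_estP, ih, pureLoop]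

theorem cost_loopP_le (n b : ℕ) (rows : List (List (Prot (XA n b) (YB n b) Bool))) (st : SSt)
    (fail : Prot (XA n b) (YS n b) Bool) (x : XA n b) (y : YS n b) (T : ℝ) (k : ℕ)
    (hT : ∀ ts ∈ rows, ∀ t ∈ ts, ∀ y' : YB n b, ((t.cost x y' : ℕ) : ℝ) ≤ T)
    (hk : ∀ ts ∈ rows, ts.length = k) (hT0 : 0 ≤ T) :
    ((loopP n b rows st fail).cost x y : ℝ)
      ≤ rows.length * (k * T) + (b + 2) +
        (if okAt n b (candOf (pureLoop n b rows st x y)) x y then 0 else (fail.cost x y : ℝ)) := by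
  induction rows generalizing st with
  | nil =>
    simp only [loopP, pureLoop, List.length_nil, Nat.cast_zero, zero_mul, zero_add]
    exact cost_finishP_le n b (candOf st) fail x y
  | cons ts rest ih =>
    rw [loopP, pureLoop]
    have h1 := cost_estP_le n b ts (midOf st)
      (fun e => loopP n b rest (updSt st e) fail) x y T
      (fun t ht => hT ts (List.mem_cons_self) t ht)
    have h2 := ih (updSt st (pureEst n b ts (midOf st) x y))
      (fun ts' hts' => hT ts' (List.mem_cons_of_mem _ hts'))
      (fun ts' hts' => hk ts' (List.mem_cons_of_mem _ hts'))
    have hlen : (ts.length : ℝ) = k := by rw [hk ts (List.mem_cons_self)]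
    simp only [List.length_cons]
    push_cast
    rw [hlen] at h1
    linarith

open Classical in
/-- The full zero-error protocol: a sequence of attempts followed by the trivial
full-communication protocol. -/
noncomputable def chainP (n b : ℕ) (f : PFn (Fin n) Bool Bool) :
    List (List (List (Prot (XA n b) (YB n b) Bool))) → Prot (XA n b) (YS n b) Bool
  | [] => fullProt (XA n b) (YS n b)
      (fun x y => (gcomp (fusab f) (IndG b Sab) x y).getD false)
  | blk :: rest => loopP n b blk (0, n, none) (chainP n b f rest)

/-- The chain protocol is always correct on the domain of the sabotaged problem. -/
theorem run_chainP (n b : ℕ) (f : PFn (Fin n) Bool Bool) (x : XA n b) (y : YS n b) (z : Bool)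
    (hdom : gcomp (fusab f) (IndG b Sab) x y = some z) :
    ∀ l, (chainP n b f l).run x y = z := by
  intro l
  induction l with
  | nil =>
    rw [chainP, run_fullProt, hdom]
    rfl
  | cons blk rest ih =>
    rw [chainP, run_loopP, run_finishP]
    set c := candOf (pureLoop n b blk (0, n, none) x y) with hc
    by_cases hok : okAt n b c x y = true
    · rw [if_pos hok]
      rw [okAt] at hok
      split at hok
      next hcn =>
        -- the candidate is the unique special position
        have hps : fusab f (pOf x y) = some z := hdom
        obtain ⟨i0, z0, hspec, huniq, hz, -⟩ := fusab_structure f (pOf x y) z hps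
        have : (⟨c, hcn⟩ : Fin n) = i0 := huniq _ hok
        rw [symAt, dif_pos hcn, this, ← hz]
      next => exact absurd hok (by simp)
    · rw [if_neg hok]
      exact ih

/-! ### Part 5: adaptive error analysis -/

/-- Did any step of the adaptive process err along its trajectory? -/
def anyErr {β St : Type} (errB : St → β → Bool) (next : St → β → St) : List β → St → Bool
  | [], _ => false
  | ρ :: rest, st => errB st ρ || anyErr errB next rest (next st ρ)

theorem adaptive_bound {β : Type} [Fintype β] (u : β → ℝ) (hu : ∀ a, 0 ≤ u a)
    (h1 : ∑ a, u a = 1) {St : Type} (errB : St → β → Bool) (next : St → β → St)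
    (δ : ℝ) (hδ0 : 0 ≤ δ)
    (hδ : ∀ st, ∑ a : β, u a * (if errB st a then 1 else 0) ≤ δ) :
    ∀ (m : ℕ) (st : St),
      ∑ τ : Fin m → β,
        (∏ s, u (τ s)) * (if anyErr errB next (List.ofFn τ) st then 1 else 0)
        ≤ m * δ := by
  intro m
  induction m with
  | zero => intro st; simp [anyErr]
  | succ m ih =>
    intro st
    rw [sum_pi_succ]
    have step : ∀ a : β, ∀ g : Fin m → β,
        (∏ s, u ((Fin.cons a g : Fin (m+1) → β) s)) *
          (if anyErr errB next (List.ofFn (Fin.cons a g : Fin (m+1) → β)) st then 1 else 0)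
        ≤ u a * (∏ s, u (g s)) * (if errB st a then 1 else 0)
          + u a * ((∏ s, u (g s)) *
              (if anyErr errB next (List.ofFn g) (next st a) then 1 else 0)) := by
      intro a g
      have hcons1 : ∏ s : Fin (m+1), u ((Fin.cons a g : Fin (m+1) → β) s) = u a * ∏ s, u (g s) := by
        rw [Fin.prod_univ_succ]; simp
      have hcons2 : List.ofFn (Fin.cons a g : Fin (m+1) → β) = a :: List.ofFn g := by
        simp [List.ofFn_succ]
      have hnn : 0 ≤ u a * ∏ s, u (g s) :=
        mul_nonneg (hu a) (Finset.prod_nonneg fun _ _ => hu _)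
      rw [hcons1, hcons2]
      show (u a * ∏ s, u (g s)) *
          (if (errB st a || anyErr errB next (List.ofFn g) (next st a)) then (1:ℝ) else 0) ≤ _
      cases hA : errB st a <;>
        cases hB : anyErr errB next (List.ofFn g) (next st a) <;>
          simp [hA, hB] <;> nlinarith [hnn]
    calc ∑ a : β, ∑ g : Fin m → β,
          (∏ s, u ((Fin.cons a g : Fin (m+1) → β) s)) *
            (if anyErr errB next (List.ofFn (Fin.cons a g : Fin (m+1) → β)) st then 1 else 0)
        ≤ ∑ a : β, ∑ g : Fin m → β,
            (u a * (∏ s, u (g s)) * (if errB st a then 1 else 0)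
              + u a * ((∏ s, u (g s)) *
                  (if anyErr errB next (List.ofFn g) (next st a) then 1 else 0))) :=
          Finset.sum_le_sum fun a _ => Finset.sum_le_sum fun g _ => step a g
      _ = (∑ a : β, u a * (if errB st a then 1 else 0))
            + ∑ a : β, u a * (∑ g : Fin m → β, (∏ s, u (g s)) *
                (if anyErr errB next (List.ofFn g) (next st a) then 1 else 0)) := by
          rw [← Finset.sum_add_distrib]
          apply Finset.sum_congr rfl
          intro a _
          rw [Finset.sum_add_distrib]
          congr 1
          · have e1 : ∀ g : Fin m → β,
                u a * (∏ s, u (g s)) * (if errB st a then 1 else 0)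
                = (u a * (if errB st a then 1 else 0)) * (∏ s, u (g s)) := fun g => by ring
            rw [Finset.sum_congr rfl fun g _ => e1 g, ← Finset.mul_sum,
              sum_pi_prod_eq_one u h1 m, mul_one]
          · rw [← Finset.mul_sum]
      _ ≤ δ + ∑ a : β, u a * (m * δ) := by
          have h2 : ∀ a : β, u a * (∑ g : Fin m → β, (∏ s, u (g s)) *
                (if anyErr errB next (List.ofFn g) (next st a) then 1 else 0))
              ≤ u a * (m * δ) :=
            fun a => mul_le_mul_of_nonneg_left (ih (next st a)) (hu a)
          have h3 := hδ st
          have h4 := Finset.sum_le_sum fun a (_ : a ∈ Finset.univ) => h2 a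
          linarith
      _ ≤ (m + 1 : ℕ) * δ := by
          rw [← Finset.sum_mul, h1, one_mul]
          push_cast
          linarith
theorem pureCnt_ofFn (n b : ℕ) {kk : ℕ} (v : Fin kk → Prot (XA n b) (YB n b) Bool)
    (m : ℕ) (x : XA n b) (y : YS n b) :
    pureCnt n b (List.ofFn v) m x y
      = ∑ i, if (v i).run x (ybarF n b m y) then 1 else 0 := by
  induction kk with
  | zero => simp [pureCnt]
  | succ kk ih =>
    rw [List.ofFn_succ, pureCnt, ih, Fin.sum_univ_succ]

/-! ### Part 6: expectation of a restarting protocol, and numeric bounds -/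

theorem restart_expectation {γ : Type} [Fintype γ] (w : γ → ℝ) (hw : ∀ a, 0 ≤ w a)
    (h1 : ∑ a, w a = 1) (FailB : γ → Bool)
    (hpf : ∑ a, w a * (if FailB a then 1 else 0) ≤ 1 / 10)
    (cst : List γ → ℝ) (hc0 : ∀ l, 0 ≤ cst l) (A Full : ℝ) (hA0 : 0 ≤ A) (hF0 : 0 ≤ Full)
    (hbase : cst [] ≤ Full)
    (hstep : ∀ a, w a ≠ 0 → ∀ l, cst (a :: l) ≤ A + (if FailB a then cst l else 0)) :
    ∀ M : ℕ, ∑ σ : Fin M → γ, (∏ j, w (σ j)) * cst (List.ofFn σ)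
      ≤ (10 / 9) * A + (1 / 10) ^ M * Full := by
  intro M
  induction M with
  | zero =>
    simp only [pow_zero, one_mul]
    have : ∑ σ : Fin 0 → γ, (∏ j, w (σ j)) * cst (List.ofFn σ)
        = cst [] := by
      rw [Finset.sum_eq_single (fun i => (i.elim0 : γ))]
      · simp
      · intro c _ hne; exact absurd (funext fun i => i.elim0) hne
      · intro h; exact absurd (Finset.mem_univ _) h
    rw [this]; linarith
  | succ M ih =>
    rw [sum_pi_succ]
    have hE0 : 0 ≤ ∑ g : Fin M → γ, (∏ j, w (g j)) * cst (List.ofFn g) :=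
      Finset.sum_nonneg fun g _ =>
        mul_nonneg (Finset.prod_nonneg fun _ _ => hw _) (hc0 _)
    set E := ∑ g : Fin M → γ, (∏ j, w (g j)) * cst (List.ofFn g) with hE
    have key : ∀ a : γ,
        ∑ g : Fin M → γ, (∏ j, w ((Fin.cons a g : Fin (M+1) → γ) j))
            * cst (List.ofFn (Fin.cons a g : Fin (M+1) → γ))
          ≤ w a * A + (w a * (if FailB a then 1 else 0)) * E := by
      intro a
      have hsimp : ∀ g : Fin M → γ,
          (∏ j, w ((Fin.cons a g : Fin (M+1) → γ) j))
              * cst (List.ofFn (Fin.cons a g : Fin (M+1) → γ))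
          = w a * ((∏ j, w (g j)) * cst (a :: List.ofFn g)) := by
        intro g
        have h2 : List.ofFn (Fin.cons a g : Fin (M+1) → γ) = a :: List.ofFn g := by
          simp [List.ofFn_succ]
        rw [h2, Fin.prod_univ_succ]
        simp [mul_assoc]
      rw [Finset.sum_congr rfl fun g _ => hsimp g, ← Finset.mul_sum]
      by_cases hwa : w a = 0
      · rw [hwa]; simp
      · have hstep' : ∀ g : Fin M → γ,
            (∏ j, w (g j)) * cst (a :: List.ofFn g)
            ≤ (∏ j, w (g j)) * (A + (if FailB a then cst (List.ofFn g) else 0)) := by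
          intro g
          exact mul_le_mul_of_nonneg_left (hstep a hwa _)
            (Finset.prod_nonneg fun _ _ => hw _)
        have hsum : ∑ g : Fin M → γ, (∏ j, w (g j)) * cst (a :: List.ofFn g)
            ≤ A + (if FailB a then 1 else 0) * E := by
          calc ∑ g : Fin M → γ, (∏ j, w (g j)) * cst (a :: List.ofFn g)
              ≤ ∑ g : Fin M → γ,
                  (∏ j, w (g j)) * (A + (if FailB a then cst (List.ofFn g) else 0)) :=
                Finset.sum_le_sum fun g _ => hstep' g
            _ = (∑ g : Fin M → γ, (∏ j, w (g j))) * A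
                + (if FailB a then 1 else 0) * E := by
                have e2 : ∀ g : Fin M → γ,
                    (∏ j, w (g j)) * (A + (if FailB a then cst (List.ofFn g) else 0))
                    = (∏ j, w (g j)) * A
                      + (if FailB a then 1 else 0) * ((∏ j, w (g j)) * cst (List.ofFn g)) := by
                  intro g; by_cases hf : FailB a <;> simp [hf] <;> ring
                rw [Finset.sum_congr rfl fun g _ => e2 g, Finset.sum_add_distrib,
                  ← Finset.sum_mul, ← Finset.mul_sum, hE]
            _ = A + (if FailB a then 1 else 0) * E := by
                rw [sum_pi_prod_eq_one w h1 M, one_mul]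
        calc w a * ∑ g : Fin M → γ, (∏ j, w (g j)) * cst (a :: List.ofFn g)
            ≤ w a * (A + (if FailB a then 1 else 0) * E) :=
              mul_le_mul_of_nonneg_left hsum (hw a)
          _ = w a * A + (w a * (if FailB a then 1 else 0)) * E := by ring
    calc ∑ a : γ, ∑ g : Fin M → γ,
          (∏ j, w ((Fin.cons a g : Fin (M+1) → γ) j))
            * cst (List.ofFn (Fin.cons a g : Fin (M+1) → γ))
        ≤ ∑ a : γ, (w a * A + (w a * (if FailB a then 1 else 0)) * E) :=
          Finset.sum_le_sum fun a _ => key a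
      _ = A + (∑ a : γ, w a * (if FailB a then 1 else 0)) * E := by
          rw [Finset.sum_add_distrib, ← Finset.sum_mul, h1, one_mul, ← Finset.sum_mul]
      _ ≤ A + (1/10) * ((10 / 9) * A + (1 / 10) ^ M * Full) := by
          have h3 : (∑ a : γ, w a * (if FailB a then 1 else 0)) * E ≤ (1/10) * E := by
            apply mul_le_mul_of_nonneg_right hpf hE0
          have h4 : (1/10 : ℝ) * E ≤ (1/10) * ((10 / 9) * A + (1 / 10) ^ M * Full) := by
            apply mul_le_mul_of_nonneg_left ih (by norm_num)
          linarith
      _ = (10 / 9) * A + (1 / 10) ^ (M + 1) * Full := by ring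

theorem S1_pow_bound (S1 : ℕ) (hS1 : 1 ≤ S1) :
    (S1 : ℝ) * (8 / 9 : ℝ) ^ (9 * (Nat.clog 2 S1 + 4)) ≤ 1 / 10 := by
  have h1 : (8 / 9 : ℝ) ^ (9 * (Nat.clog 2 S1 + 4))
      = ((8 / 9 : ℝ) ^ 9) ^ (Nat.clog 2 S1 + 4) := by rw [← pow_mul]
  have h2 : ((8 / 9 : ℝ) ^ 9) ≤ 1 / 2 := by norm_num
  have h3 : ((8 / 9 : ℝ) ^ 9) ^ (Nat.clog 2 S1 + 4) ≤ (1 / 2 : ℝ) ^ (Nat.clog 2 S1 + 4) :=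
    pow_le_pow_left₀ (by positivity) h2 _
  have h4 : (1 / 2 : ℝ) ^ (Nat.clog 2 S1 + 4) = (1/2:ℝ) ^ Nat.clog 2 S1 * (1/16) := by
    rw [pow_add]; norm_num
  have h5 : (S1 : ℝ) ≤ 2 ^ Nat.clog 2 S1 := by
    have := Nat.le_pow_clog (by norm_num : 1 < 2) S1
    exact_mod_cast this
  have h6 : (S1:ℝ) * (1/2:ℝ) ^ Nat.clog 2 S1 ≤ 1 := by
    rw [div_pow, one_pow, mul_one_div, div_le_one (by positivity)]
    exact h5
  calc (S1 : ℝ) * (8 / 9 : ℝ) ^ (9 * (Nat.clog 2 S1 + 4))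
      ≤ (S1 : ℝ) * ((1/2:ℝ) ^ Nat.clog 2 S1 * (1/16)) := by
        rw [h1]
        apply mul_le_mul_of_nonneg_left (le_trans h3 (le_of_eq h4)) (by positivity)
    _ = ((S1:ℝ) * (1/2:ℝ) ^ Nat.clog 2 S1) * (1/16) := by ring
    _ ≤ 1 * (1/16) := by apply mul_le_mul_of_nonneg_right h6 (by norm_num)
    _ ≤ 1 / 10 := by norm_num

theorem tail_le_one (m : ℕ) : (1 / 10 : ℝ) ^ (m + 1) * (m + 2) ≤ 1 := by
  have h1 : (m + 2 : ℝ) ≤ (10 : ℝ) ^ (m + 1) := by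
    have : m + 2 ≤ 10 ^ (m + 1) := by
      have := Nat.lt_pow_self (n := m + 1) (by norm_num : 1 < 10)
      omega
    exact_mod_cast this
  have h2 : (1 / 10 : ℝ) ^ (m + 1) = ((10:ℝ) ^ (m + 1))⁻¹ := by
    rw [div_pow, one_pow, one_div]
  rw [h2]
  rw [inv_mul_le_iff₀ (by positivity)]
  linarith

/-! ### Part 7: search correctness and failure probability -/

def rowOf {n b : ℕ} (P : RandProt (XA n b) (YB n b) Bool) {k : ℕ} (ρ : Fin k → P.Ω) :
    List (Prot (XA n b) (YB n b) Bool) := List.ofFn (fun i => P.prot (ρ i))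

def errStep {n b : ℕ} (P : RandProt (XA n b) (YB n b) Bool) (x : XA n b) (y : YS n b)
    (tv : ℕ → Bool) (st : SSt) {k : ℕ} (ρ : Fin k → P.Ω) : Bool :=
  decide (pureEst n b (rowOf P ρ) (midOf st) x y ≠ tv (midOf st))

def nextStep {n b : ℕ} (P : RandProt (XA n b) (YB n b) Bool) (x : XA n b) (y : YS n b)
    (st : SSt) {k : ℕ} (ρ : Fin k → P.Ω) : SSt :=
  updSt st (pureEst n b (rowOf P ρ) (midOf st) x y)

theorem search_ok {n b : ℕ} (P : RandProt (XA n b) (YB n b) Bool) {k : ℕ}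
    (x : XA n b) (y : YS n b) (i0 : Fin n) (z0 : Bool)
    (tv : ℕ → Bool) (htv : ∀ m, tv m = if (i0 : ℕ) < m then !z0 else z0) :
    ∀ (l : List (Fin k → P.Ω)) (lo hi : ℕ),
      anyErr (fun st (ρ : Fin k → P.Ω) => errStep P x y tv st ρ)
          (fun st ρ => nextStep P x y st ρ) l (lo, hi, some z0) = false →
      lo ≤ (i0 : ℕ) → (i0 : ℕ) < hi → hi - lo ≤ 2 ^ l.length →
      candOf (pureLoop n b (l.map (rowOf P)) (lo, hi, some z0) x y) = (i0 : ℕ) := by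
  intro l
  induction l with
  | nil =>
    intro lo hi _ h1 h2 h3
    simp only [List.length_nil, pow_zero] at h3
    have : lo = (i0 : ℕ) := by omega
    simpa [pureLoop, candOf] using this
  | cons ρ rest ih =>
    intro lo hi hany h1 h2 h3
    rw [anyErr, Bool.or_eq_false_iff] at hany
    obtain ⟨herr, hrest⟩ := hany
    have he : pureEst n b (rowOf P ρ) (midOf (lo, hi, some z0)) x y
        = tv (midOf (lo, hi, some z0)) := by
      have := of_decide_eq_false herr
      exact not_not.mp this
    have hmid : midOf (lo, hi, some z0) = (lo + hi) / 2 := rfl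
    rw [List.map_cons, pureLoop]
    rw [show nextStep P x y (lo, hi, some z0) ρ
      = updSt (lo, hi, some z0) (pureEst n b (rowOf P ρ) (midOf (lo, hi, some z0)) x y)
      from rfl] at hrest
    by_cases hle : hi ≤ lo + 1
    · have hupd : updSt (lo, hi, some z0)
          (pureEst n b (rowOf P ρ) (midOf (lo, hi, some z0)) x y) = (lo, hi, some z0) := by
        rw [updSt]; rw [if_pos hle]
      rw [hupd] at hrest ⊢
      exact ih lo hi hrest h1 h2 (le_trans (by omega) Nat.one_le_two_pow)
    · have h2pow : (2:ℕ) ^ (rest.length + 1) = 2 * 2 ^ rest.length := by ring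
      by_cases hm : (i0 : ℕ) < (lo + hi) / 2
      · -- true value at mid is !z0, so the estimate is !z0 ≠ z0 and we move hi down
        have he' : pureEst n b (rowOf P ρ) (midOf (lo, hi, some z0)) x y = !z0 := by
          rw [he, hmid, htv, if_pos hm]
        have hupd : updSt (lo, hi, some z0)
            (pureEst n b (rowOf P ρ) (midOf (lo, hi, some z0)) x y)
            = (lo, (lo + hi) / 2, some z0) := by
          rw [he', updSt, if_neg hle, if_neg (by simp : ¬ ((!z0) = z0))]
        rw [hupd] at hrest ⊢
        apply ih lo ((lo + hi) / 2) hrest h1 hm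
        simp only [List.length_cons] at h3
        omega
      · have he' : pureEst n b (rowOf P ρ) (midOf (lo, hi, some z0)) x y = z0 := by
          rw [he, hmid, htv, if_neg hm]
        have hupd : updSt (lo, hi, some z0)
            (pureEst n b (rowOf P ρ) (midOf (lo, hi, some z0)) x y)
            = ((lo + hi) / 2, hi, some z0) := by
          rw [he', updSt, if_neg hle, if_pos rfl]
        rw [hupd] at hrest ⊢
        apply ih ((lo + hi) / 2) hi hrest (by omega) h2
        simp only [List.length_cons] at h3
        omega

theorem attempt_ok {n b : ℕ} (P : RandProt (XA n b) (YB n b) Bool) {k : ℕ}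
    (x : XA n b) (y : YS n b) (i0 : Fin n) (z0 : Bool)
    (tv : ℕ → Bool) (htv : ∀ m, tv m = if (i0 : ℕ) < m then !z0 else z0)
    (l : List (Fin k → P.Ω)) (hlen : l.length = Nat.clog 2 n + 1)
    (hany : anyErr (fun st (ρ : Fin k → P.Ω) => errStep P x y tv st ρ)
        (fun st ρ => nextStep P x y st ρ) l (0, n, none) = false) :
    candOf (pureLoop n b (l.map (rowOf P)) (0, n, none) x y) = (i0 : ℕ) := by
  cases l with
  | nil => simp at hlen
  | cons ρ rest =>
    rw [anyErr, Bool.or_eq_false_iff] at hany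
    obtain ⟨herr, hrest⟩ := hany
    have he : pureEst n b (rowOf P ρ) (midOf (0, n, none)) x y
        = tv (midOf (0, n, none)) := not_not.mp (of_decide_eq_false herr)
    have hmid : midOf (0, n, none) = 0 := rfl
    have he' : pureEst n b (rowOf P ρ) (midOf (0, n, none)) x y = z0 := by
      rw [he, hmid, htv]; simp
    have hnext : nextStep P x y (0, n, none) ρ = (0, n, some z0) := by
      rw [nextStep, he', updSt]
    rw [hnext] at hrest
    rw [List.map_cons, pureLoop, he']
    have hupd : updSt (0, n, none) z0 = (0, n, some z0) := rfl
    rw [hupd]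
    apply search_ok P x y i0 z0 tv htv rest 0 n hrest (Nat.zero_le _) i0.isLt
    simp only [List.length_cons] at hlen
    have : rest.length = Nat.clog 2 n := by omega
    rw [this]
    simpa using Nat.le_pow_clog (by norm_num) n

theorem step_err_bound {n b : ℕ} (f : PFn (Fin n) Bool Bool)
    (P : RandProt (XA n b) (YB n b) Bool)
    (hP : P.Computes (gcomp f (IndG b Bool)) (1/3))
    (x : XA n b) (y : YS n b) (tv : ℕ → Bool)
    (hval : ∀ m : ℕ, gcomp f (IndG b Bool) x (ybarF n b m y) = some (tv m))
    (r : ℕ) (st : SSt) :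
    ∑ ρ : Fin (2 * r) → P.Ω, (∏ i, P.p (ρ i)) *
        (if errStep P x y tv st ρ then 1 else 0) ≤ (8 / 9 : ℝ) ^ r := by
  classical
  set m := midOf st with hm
  set bad : P.Ω → Bool := fun ω => decide (¬ ((P.prot ω).run x (ybarF n b m y) = tv m))
    with hbad
  have hb : (∑ ω, if bad ω then P.p ω else 0) ≤ 1 / 3 := by
    have hsucc := hP x (ybarF n b m y) (tv m) (hval m)
    rw [RandProt.succProb] at hsucc
    have hsplit : ∀ ω : P.Ω, (if bad ω then P.p ω else 0)
        + (if (P.prot ω).run x (ybarF n b m y) = tv m then P.p ω else 0) = P.p ω := by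
      intro ω
      by_cases h : (P.prot ω).run x (ybarF n b m y) = tv m <;> simp [hbad, h]
    have hsum := Finset.sum_congr rfl fun (ω : P.Ω) (_ : ω ∈ Finset.univ) => hsplit ω
    rw [Finset.sum_add_distrib, P.sum_one] at hsum
    have : (1:ℝ) - 1/3 ≤ ∑ ω, if (P.prot ω).run x (ybarF n b m y) = tv m
        then P.p ω else 0 := by
      refine le_trans hsucc (le_of_eq ?_)
      apply Finset.sum_congr rfl
      intro ω _
      congr 1
    linarith
  have hcher := chernoff P.p P.nonneg P.sum_one bad hb r
  refine le_trans (Finset.sum_le_sum ?_) hcher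
  intro ρ _
  have hprod : 0 ≤ ∏ i, P.p (ρ i) := Finset.prod_nonneg fun _ _ => P.nonneg _
  by_cases herr : errStep P x y tv st ρ = true
  · have hne : pureEst n b (rowOf P ρ) (midOf st) x y ≠ tv (midOf st) :=
      of_decide_eq_true herr
    rw [← hm] at hne
    have hcnt : pureCnt n b (rowOf P ρ) m x y
        = ∑ i, if (P.prot (ρ i)).run x (ybarF n b m y) then 1 else 0 :=
      pureCnt_ofFn n b (fun i => P.prot (ρ i)) m x y
    have hlen : (rowOf P ρ).length = 2 * r := by simp [rowOf]
    have hW : r ≤ ∑ i, (if bad (ρ i) then 1 else 0) := by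
      cases htvm : tv m
      · -- true value false, estimate true
        have hpe : pureEst n b (rowOf P ρ) m x y = true := by
          cases hpe' : pureEst n b (rowOf P ρ) m x y
          · exact absurd (hpe'.trans htvm.symm) hne
          · rfl
        have hlt : (rowOf P ρ).length < 2 * pureCnt n b (rowOf P ρ) m x y :=
          of_decide_eq_true hpe
        have hbadrun : ∀ i : Fin (2*r), (if bad (ρ i) then (1:ℕ) else 0)
            = (if (P.prot (ρ i)).run x (ybarF n b m y) then 1 else 0) := by
          intro i
          cases hrun : (P.prot (ρ i)).run x (ybarF n b m y) <;> simp [hbad, hrun, htvm]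
        rw [Finset.sum_congr rfl fun i _ => hbadrun i, ← hcnt]
        omega
      · -- true value true, estimate false
        have hpe : pureEst n b (rowOf P ρ) m x y = false := by
          cases hpe' : pureEst n b (rowOf P ρ) m x y
          · rfl
          · exact absurd (hpe'.trans htvm.symm) hne
        have hlt : ¬ ((rowOf P ρ).length < 2 * pureCnt n b (rowOf P ρ) m x y) :=
          of_decide_eq_false hpe
        have hbadrun : ∀ i : Fin (2*r), (if bad (ρ i) then (1:ℕ) else 0)
            + (if (P.prot (ρ i)).run x (ybarF n b m y) then 1 else 0) = 1 := by
          intro i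
          cases hrun : (P.prot (ρ i)).run x (ybarF n b m y) <;> simp [hbad, hrun, htvm]
        have hsum2 := Finset.sum_congr rfl fun (i : Fin (2*r)) (_ : i ∈ Finset.univ)
          => hbadrun i
        rw [Finset.sum_add_distrib, ← hcnt] at hsum2
        simp only [Finset.sum_const, Finset.card_univ, Fintype.card_fin, smul_eq_mul,
          mul_one] at hsum2
        omega
    rw [if_pos herr, if_pos hW]
  · rw [if_neg herr, mul_zero]
    have : (0:ℝ) ≤ (if r ≤ ∑ i, (if bad (ρ i) then 1 else 0) then (1:ℝ) else 0) := by
      split <;> norm_num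
    exact mul_nonneg hprod this

def FailB {n b : ℕ} (P : RandProt (XA n b) (YB n b) Bool) {S1 k : ℕ}
    (x : XA n b) (y : YS n b) (τ : Fin S1 → Fin k → P.Ω) : Bool :=
  !(okAt n b (candOf (pureLoop n b ((List.ofFn τ).map (rowOf P)) (0, n, none) x y)) x y)

theorem pfail_le {n b : ℕ} (f : PFn (Fin n) Bool Bool)
    (P : RandProt (XA n b) (YB n b) Bool)
    (hP : P.Computes (gcomp f (IndG b Bool)) (1/3))
    (x : XA n b) (y : YS n b) (z : Bool)
    (hdom : gcomp (fusab f) (IndG b Sab) x y = some z) :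
    ∑ τ : Fin (Nat.clog 2 n + 1) →
        (Fin (2 * (9 * (Nat.clog 2 (Nat.clog 2 n + 1) + 4))) → P.Ω),
      (∏ s, ∏ i, P.p (τ s i)) * (if FailB P x y τ then 1 else 0) ≤ 1 / 10 := by
  classical
  obtain ⟨i0, z0, hspec, huniq, hz, hval'⟩ := fusab_structure f (pOf x y) z hdom
  set r := 9 * (Nat.clog 2 (Nat.clog 2 n + 1) + 4) with hr
  set S1 := Nat.clog 2 n + 1 with hS1
  set tv : ℕ → Bool := fun m => if (i0 : ℕ) < m then !z0 else z0 with htvdef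
  have htv : ∀ m, tv m = if (i0 : ℕ) < m then !z0 else z0 := fun m => rfl
  have hval : ∀ m : ℕ, gcomp f (IndG b Bool) x (ybarF n b m y) = some (tv m) := by
    intro m
    have h1 : gcomp f (IndG b Bool) x (ybarF n b m y)
        = f (cmpl (pOf x y) (fun i => decide ((i : ℕ) < m))) := by
      rw [gcomp, gadget_ybarF]
    rw [h1, hval' (fun i => decide ((i : ℕ) < m))]
    congr 1
    by_cases h : (i0 : ℕ) < m <;> simp [htvdef, h]
  -- pointwise comparison with anyErr
  have hpoint : ∀ τ : Fin S1 → (Fin (2 * r) → P.Ω),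
      ((if FailB P x y τ then (1:ℝ) else 0))
        ≤ (if anyErr (fun st (ρ : Fin (2*r) → P.Ω) => errStep P x y tv st ρ)
            (fun st ρ => nextStep P x y st ρ) (List.ofFn τ) (0, n, none) then 1 else 0) := by
    intro τ
    cases hany : anyErr (fun st (ρ : Fin (2*r) → P.Ω) => errStep P x y tv st ρ)
        (fun st ρ => nextStep P x y st ρ) (List.ofFn τ) (0, n, none)
    · have hcand := attempt_ok P x y i0 z0 tv htv (List.ofFn τ) (by simp [hS1]) hany
      have hfail : FailB P x y τ = false := by
        rw [FailB, hcand, okAt, dif_pos i0.isLt]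
        simp only [Fin.eta]
        rw [hspec]
        rfl
      rw [hfail]
    · split <;> norm_num
  have hmono : ∑ τ : Fin S1 → (Fin (2 * r) → P.Ω),
      (∏ s, ∏ i, P.p (τ s i)) * (if FailB P x y τ then 1 else 0)
      ≤ ∑ τ : Fin S1 → (Fin (2 * r) → P.Ω),
        (∏ s, (fun (ρ : Fin (2*r) → P.Ω) => ∏ i, P.p (ρ i)) (τ s)) *
          (if anyErr (fun st (ρ : Fin (2*r) → P.Ω) => errStep P x y tv st ρ)
            (fun st ρ => nextStep P x y st ρ) (List.ofFn τ) (0, n, none) then 1 else 0) := by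
    apply Finset.sum_le_sum
    intro τ _
    exact mul_le_mul_of_nonneg_left (hpoint τ)
      (Finset.prod_nonneg fun _ _ => Finset.prod_nonneg fun _ _ => P.nonneg _)
  have hada := adaptive_bound (fun (ρ : Fin (2*r) → P.Ω) => ∏ i, P.p (ρ i))
    (fun ρ => Finset.prod_nonneg fun _ _ => P.nonneg _)
    (sum_pi_prod_eq_one P.p P.sum_one (2*r))
    (fun st (ρ : Fin (2*r) → P.Ω) => errStep P x y tv st ρ)
    (fun st ρ => nextStep P x y st ρ)
    ((8/9:ℝ)^r) (by positivity)
    (fun st => step_err_bound f P hP x y tv hval r st)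
    S1 (0, n, none)
  have hnum : (S1 : ℝ) * (8/9:ℝ)^r ≤ 1/10 := by
    rw [hr, hS1]
    exact S1_pow_bound (Nat.clog 2 n + 1) (by omega)
  exact le_trans hmono (le_trans hada hnum)

/-! ### Part 8: the zero-error randomized protocol -/

theorem build_Q (n b : ℕ) (f : PFn (Fin n) Bool Bool) (T : ℝ) (hT0 : 0 ≤ T)
    (P : RandProt (XA n b) (YB n b) Bool)
    (hP : P.Computes (gcomp f (IndG b Bool)) (1/3)) (hW : P.WCostLe T) :
    ∃ Q : RandProt (XA n b) (YS n b) Bool,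
      Q.Computes (gcomp (fusab f) (IndG b Sab)) 0 ∧
      Q.ECostLe (gcomp (fusab f) (IndG b Sab))
        ((10/9) * (((Nat.clog 2 n + 1 : ℕ) : ℝ) *
          (((2 * (9 * (Nat.clog 2 (Nat.clog 2 n + 1) + 4)) : ℕ) : ℝ) * T) + ((b:ℝ) + 2)) + 1) := by
  classical
  set S1 := Nat.clog 2 n + 1 with hS1
  set r := 9 * (Nat.clog 2 S1 + 4) with hr
  set k := 2 * r with hk
  set M := n * b + 1 with hM
  set wB : (Fin S1 → Fin k → P.Ω) → ℝ := fun τ => ∏ s, ∏ i, P.p (τ s i) with hwB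
  have hwB0 : ∀ τ, 0 ≤ wB τ := fun τ =>
    Finset.prod_nonneg fun _ _ => Finset.prod_nonneg fun _ _ => P.nonneg _
  have hwB1 : ∑ τ : Fin S1 → Fin k → P.Ω, wB τ = 1 := by
    have h0 : ∑ ρ : Fin k → P.Ω, (∏ i, P.p (ρ i)) = 1 :=
      sum_pi_prod_eq_one P.p P.sum_one k
    exact sum_pi_prod_eq_one (fun ρ : Fin k → P.Ω => ∏ i, P.p (ρ i)) h0 S1
  set blkOf : (Fin S1 → Fin k → P.Ω) → List (List (Prot (XA n b) (YB n b) Bool)) :=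
    fun τ => (List.ofFn τ).map (rowOf P) with hblkOf
  refine ⟨{ Ω := Fin M → Fin S1 → Fin k → P.Ω
            fin := by infer_instance
            p := fun σ => ∏ j, wB (σ j)
            nonneg := fun σ => Finset.prod_nonneg fun _ _ => hwB0 _
            sum_one := sum_pi_prod_eq_one wB hwB1 M
            prot := fun σ => chainP n b f ((List.ofFn σ).map blkOf) }, ?_, ?_⟩
  · -- zero-error correctness
    intro x y z hdom
    rw [RandProt.succProb]
    calc (1:ℝ) - 0 ≤ 1 := by norm_num
      _ = ∑ σ : Fin M → Fin S1 → Fin k → P.Ω, ∏ j, wB (σ j) :=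
          (sum_pi_prod_eq_one wB hwB1 M).symm
      _ ≤ _ := Finset.sum_le_sum fun σ _ =>
          le_of_eq (if_pos (run_chainP n b f x y z hdom _)).symm
  · -- expected cost
    intro x y hsome
    obtain ⟨z, hdom⟩ := Option.isSome_iff_exists.mp hsome
    rw [RandProt.expCost]
    set A : ℝ := (S1 : ℝ) * ((k:ℝ) * T) + ((b:ℝ) + 2) with hA
    have hA0 : 0 ≤ A := by
      have : (0:ℝ) ≤ (S1:ℝ) * ((k:ℝ) * T) :=
        mul_nonneg (Nat.cast_nonneg _) (mul_nonneg (Nat.cast_nonneg _) hT0)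
      have hb2 : (0:ℝ) ≤ (b:ℝ) + 2 := by positivity
      linarith
    set Full : ℝ := ((Nat.clog 2 (Fintype.card (XA n b) + 1) + 1 : ℕ) : ℝ) with hFull
    have hexp := restart_expectation wB hwB0 hwB1 (fun τ => FailB P x y τ)
      (pfail_le f P hP x y z hdom)
      (fun l => ((chainP n b f (l.map blkOf)).cost x y : ℝ))
      (fun l => Nat.cast_nonneg _) A Full hA0 (Nat.cast_nonneg _)
      (by show ((chainP n b f (List.map blkOf [])).cost x y : ℝ) ≤ Full
          rw [List.map_nil, chainP, cost_fullProt])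
      ?hstep M
    case hstep =>
      intro τ hτ l
      simp only [List.map_cons]
      show ((chainP n b f (blkOf τ :: l.map blkOf)).cost x y : ℝ) ≤ _
      rw [chainP]
      have hT' : ∀ ts ∈ blkOf τ, ∀ t ∈ ts, ∀ y' : YB n b, ((t.cost x y' : ℕ) : ℝ) ≤ T := by
        intro ts hts t ht y'
        rw [hblkOf] at hts
        obtain ⟨ρ, hρ, rfl⟩ := List.mem_map.mp hts
        rcases List.mem_ofFn.mp hρ with ⟨s, rfl⟩
        rw [rowOf] at ht
        rcases List.mem_ofFn.mp ht with ⟨i, rfl⟩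
        apply hW
        · intro hzero
          apply hτ
          rw [hwB]
          refine Finset.prod_eq_zero (Finset.mem_univ s) ?_
          exact Finset.prod_eq_zero (Finset.mem_univ i) hzero
      have hk' : ∀ ts ∈ blkOf τ, ts.length = k := by
        intro ts hts
        rw [hblkOf] at hts
        obtain ⟨ρ, hρ, rfl⟩ := List.mem_map.mp hts
        rw [rowOf, List.length_ofFn]
      have hloop := cost_loopP_le n b (blkOf τ) (0, n, none)
        (chainP n b f (l.map blkOf)) x y T k hT' hk' hT0
      have hlen : ((blkOf τ).length : ℝ) = (S1:ℝ) := by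
        show ((List.map (rowOf P) (List.ofFn τ)).length : ℝ) = _
        rw [List.length_map, List.length_ofFn]
      rw [hlen] at hloop
      refine le_trans hloop ?_
      rw [hA]
      have hiteeq : (if okAt n b (candOf (pureLoop n b (blkOf τ) (0, n, none) x y)) x y
            then (0:ℝ) else ((chainP n b f (l.map blkOf)).cost x y : ℝ))
          = (if FailB P x y τ then ((chainP n b f (l.map blkOf)).cost x y : ℝ) else 0) := by
        rw [FailB, hblkOf]
        cases hok : okAt n b (candOf (pureLoop n b ((List.ofFn τ).map (rowOf P))
            (0, n, none) x y)) x y <;> simp [hok]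
      rw [hiteeq]
    refine le_trans hexp ?_
    have htail : (1/10:ℝ)^M * Full ≤ 1 := by
      have hcard : Fintype.card (XA n b) = 2 ^ (b * n) := by
        rw [show Fintype.card (XA n b) = (2^b)^n from by
          simp [XA, Fintype.card_fun], ← pow_mul]
      have hclog : Nat.clog 2 (Fintype.card (XA n b) + 1) ≤ b * n + 1 := by
        rw [hcard]
        have h2 : 2 ^ (b*n) + 1 ≤ 2 ^ (b*n + 1) := by
          have := Nat.one_le_two_pow (n := b*n)
          rw [pow_succ]; omega
        calc Nat.clog 2 (2 ^ (b*n) + 1) ≤ Nat.clog 2 (2 ^ (b*n+1)) :=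
              Nat.clog_mono_right 2 h2
          _ = b*n+1 := Nat.clog_pow 2 _ (by norm_num)
      have hFle : Full ≤ (n*b : ℝ) + 2 := by
        rw [hFull]
        have : Nat.clog 2 (Fintype.card (XA n b) + 1) + 1 ≤ n * b + 2 := by
          have hbn : b * n = n * b := Nat.mul_comm b n
          omega
        exact_mod_cast this
      calc (1/10:ℝ)^M * Full ≤ (1/10:ℝ)^M * ((n*b:ℝ) + 2) := by
            apply mul_le_mul_of_nonneg_left hFle (by positivity)
        _ ≤ 1 := by
            rw [hM]
            have := tail_le_one (n*b)
            push_cast at this ⊢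
            linarith
    linarith

/-! ### Part 9: glue facts about `Rcc` and `R0cc` -/

/-- A deterministic protocol as a randomized protocol. -/
def detRP {X Y : Type} (t : Prot X Y Bool) : RandProt X Y Bool where
  Ω := PUnit
  fin := inferInstance
  p := fun _ => 1
  nonneg := fun _ => zero_le_one
  sum_one := by simp
  prot := fun _ => t

theorem detRP_succProb {X Y : Type} (t : Prot X Y Bool) (x : X) (y : Y) (z : Bool)
    (h : t.run x y = z) : (detRP t).succProb x y z = 1 := by
  rw [RandProt.succProb]
  simp [detRP, h]
  rfl

theorem Rcc_mem {n b : ℕ} (f : PFn (Fin n) Bool Bool) :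
    ((Nat.clog 2 (Fintype.card (XA n b) + 1) + 1 : ℕ) : ℝ) ∈
      {T : ℝ | 0 ≤ T ∧ ∃ P : RandProt (XA n b) (YB n b) Bool,
        P.Computes (gcomp f (IndG b Bool)) (1/3) ∧ P.WCostLe T} := by
  classical
  refine ⟨Nat.cast_nonneg _, detRP (fullProt (XA n b) (YB n b)
    (fun x y => (gcomp f (IndG b Bool) x y).getD false)), ?_, ?_⟩
  · intro x y z hz
    rw [detRP_succProb _ x y z (by rw [run_fullProt, hz]; rfl)]
    norm_num
  · intro ω hω x y
    simp only [detRP]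
    rw [cost_fullProt]

theorem Rcc_nonneg {X Y Z : Type} (F : CFn X Y Z) : 0 ≤ Rcc F :=
  Real.sInf_nonneg fun _ hx => hx.1

theorem R0cc_nonneg {X Y Z : Type} (F : CFn X Y Z) : 0 ≤ R0cc F :=
  Real.sInf_nonneg fun _ hx => hx.1

/-- If the lifted problem has both a `0`-input and a `1`-input, any bounded-error
protocol must communicate at least one bit. -/
theorem one_le_of_mem {X Y : Type} [Nonempty X] [Nonempty Y] (F : CFn X Y Bool)
    (xA : X) (yA : Y) (xB : X) (yB : Y)
    (hA : F xA yA = some false) (hB : F xB yB = some true)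
    (T : ℝ)
    (hT : T ∈ {T : ℝ | 0 ≤ T ∧ ∃ P : RandProt X Y Bool,
        P.Computes F (1/3) ∧ P.WCostLe T}) : 1 ≤ T := by
  classical
  obtain ⟨hT0, P, hPc, hPw⟩ := hT
  by_contra hlt
  push_neg at hlt
  -- every protocol in the support is a constant leaf
  have hconst : ∀ ω, P.p ω ≠ 0 → (P.prot ω).run xA yA = (P.prot ω).run xB yB := by
    intro ω hω
    have hcA := hPw ω hω xA yA
    cases ht : P.prot ω with
    | leaf z => rfl
    | anode msg next =>
      exfalso
      rw [ht] at hcA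
      have h1 : (1:ℝ) ≤ ((Prot.anode msg next).cost xA yA : ℕ) := by
        have : 1 ≤ (Prot.anode msg next).cost xA yA := by
          rw [Prot.cost]; omega
        exact_mod_cast this
      linarith
    | bnode msg next =>
      exfalso
      rw [ht] at hcA
      have h1 : (1:ℝ) ≤ ((Prot.bnode msg next).cost xA yA : ℕ) := by
        have : 1 ≤ (Prot.bnode msg next).cost xA yA := by
          rw [Prot.cost]; omega
        exact_mod_cast this
      linarith
  have h1 := hPc xA yA false hA
  have h2 := hPc xB yB true hB
  rw [RandProt.succProb] at h1 h2
  have h1' : (1:ℝ) - 1/3 ≤ ∑ ω, (if (P.prot ω).run xA yA = false then P.p ω else 0) := by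
    refine le_trans h1 (le_of_eq (Finset.sum_congr rfl fun ω _ => ?_))
    congr 1
  have h2' : (1:ℝ) - 1/3 ≤ ∑ ω, (if (P.prot ω).run xB yB = true then P.p ω else 0) := by
    refine le_trans h2 (le_of_eq (Finset.sum_congr rfl fun ω _ => ?_))
    congr 1
  have hsum : ∑ ω, ((if (P.prot ω).run xA yA = false then P.p ω else 0)
      + (if (P.prot ω).run xB yB = true then P.p ω else 0)) ≤ ∑ ω, P.p ω := by
    apply Finset.sum_le_sum
    intro ω _
    by_cases hω : P.p ω = 0
    · simp [hω]
    · have hc := hconst ω hω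
      have hp := P.nonneg ω
      by_cases hA' : (P.prot ω).run xA yA = false
      · have hB' : ¬ ((P.prot ω).run xB yB = true) := by
          rw [← hc, hA']; simp
        simp [hA', hB']
      · rw [if_neg hA', zero_add]
        split <;> linarith
  rw [Finset.sum_add_distrib, P.sum_one] at hsum
  linarith

/-! ### Part 10: logarithmic estimates -/

theorem clog2_le_real (m : ℕ) (hm : 2 ≤ m) :
    (Nat.clog 2 m : ℝ) ≤ Real.log m / Real.log 2 + 1 := by
  have hl2 : (0:ℝ) < Real.log 2 := Real.log_pos (by norm_num)
  have hc1 : 1 ≤ Nat.clog 2 m := Nat.clog_pos (by norm_num) (by omega)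
  have hpow : 2 ^ (Nat.clog 2 m - 1) < m :=
    Nat.pow_pred_clog_lt_self (by norm_num) (by omega)
  have hcast : ((2:ℝ)) ^ (Nat.clog 2 m - 1) < (m:ℝ) := by exact_mod_cast hpow
  have hlog : ((Nat.clog 2 m - 1 : ℕ) : ℝ) * Real.log 2 ≤ Real.log m := by
    rw [← Real.log_pow]
    exact Real.log_le_log (by positivity) (le_of_lt hcast)
  have hsub : ((Nat.clog 2 m - 1 : ℕ) : ℝ) = (Nat.clog 2 m : ℝ) - 1 := by
    rw [Nat.cast_sub hc1]; norm_num
  rw [hsub] at hlog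
  have h2 : (Nat.clog 2 m : ℝ) - 1 ≤ Real.log m / Real.log 2 := (le_div_iff₀ hl2).mpr hlog
  linarith

theorem clog2_le_real' (m : ℕ) (hm : 2 ≤ m) :
    (Nat.clog 2 m : ℝ) ≤ 2 * Real.log m + 1 := by
  have h1 := clog2_le_real m hm
  have hl2 : (0.6931471803:ℝ) < Real.log 2 := Real.log_two_gt_d9
  have hlm : (0:ℝ) ≤ Real.log m := Real.log_nonneg (by exact_mod_cast (by omega : 1 ≤ m))
  have h2 : Real.log m / Real.log 2 ≤ 2 * Real.log m := by
    rw [div_le_iff₀ (by linarith)]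
    nlinarith
  linarith

theorem arith_main (C : ℝ) (hC : 0 < C) :
    ∃ K : ℝ, 0 < K ∧ ∀ (n b : ℕ) (T : ℝ), 3 ≤ n → (b : ℝ) ≤ C * Real.log n → 1 ≤ T →
      (10/9) * (((Nat.clog 2 n + 1 : ℕ) : ℝ) *
          (((2 * (9 * (Nat.clog 2 (Nat.clog 2 n + 1) + 4)) : ℕ) : ℝ) * T) + ((b:ℝ) + 2)) + 1
        ≤ K * T * (Real.log n * Real.log (Real.log n)) := by
  have hl3 : (1:ℝ) < Real.log 3 := by
    have h := Real.exp_one_lt_d9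
    rw [show (1:ℝ) = Real.log (Real.exp 1) from (Real.log_exp 1).symm]
    exact Real.log_lt_log (Real.exp_pos 1) (by linarith)
  set l3 := Real.log 3 with hl3def
  set η := Real.log l3 with hηdef
  have hη : 0 < η := Real.log_pos hl3
  have hl30 : (0:ℝ) < l3 := by linarith
  refine ⟨(10/9) * (144 + 564/η + C/η + 2/(l3*η)) + 1/(l3*η), by positivity, ?_⟩
  intro n b T hn3 hb hT
  have hT0 : (0:ℝ) ≤ T := by linarith
  have hln : l3 ≤ Real.log n := Real.log_le_log (by norm_num) (by exact_mod_cast hn3)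
  have hln1 : 1 < Real.log n := lt_of_lt_of_le hl3 hln
  have hlln : η ≤ Real.log (Real.log n) := Real.log_le_log hl30 hln
  have hlln0 : 0 < Real.log (Real.log n) := lt_of_lt_of_le hη hlln
  set L := Real.log n * Real.log (Real.log n) with hL
  have hL0 : 0 < L := mul_pos (by linarith) hlln0
  have hLl : l3 * η ≤ L := by
    rw [hL]
    exact mul_le_mul hln hlln (le_of_lt hη) (by linarith)
  have hclogn : (Nat.clog 2 n : ℝ) ≤ 2 * Real.log n + 1 := clog2_le_real' n (by omega)
  have hS1 : ((Nat.clog 2 n + 1 : ℕ):ℝ) ≤ 4 * Real.log n := by push_cast; linarith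
  have hc1 : 1 ≤ Nat.clog 2 n := Nat.clog_pos (by norm_num) (by omega)
  have hclogS1 : (Nat.clog 2 (Nat.clog 2 n + 1) : ℝ)
      ≤ 2 * Real.log ((Nat.clog 2 n + 1 : ℕ):ℝ) + 1 := clog2_le_real' _ (by omega)
  have hS1pos : (0:ℝ) < ((Nat.clog 2 n + 1 : ℕ):ℝ) := by positivity
  have hlogS1 : Real.log ((Nat.clog 2 n + 1 : ℕ):ℝ)
      ≤ Real.log 4 + Real.log (Real.log n) := by
    calc Real.log ((Nat.clog 2 n + 1 : ℕ):ℝ) ≤ Real.log (4 * Real.log n) :=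
          Real.log_le_log hS1pos hS1
      _ = Real.log 4 + Real.log (Real.log n) := Real.log_mul (by norm_num) (by linarith)
  have hlog4 : Real.log 4 ≤ 1.4 := by
    have h2 : Real.log 2 < 0.6931471808 := Real.log_two_lt_d9
    have h4 : Real.log 4 = 2 * Real.log 2 := by
      rw [show (4:ℝ) = 2^2 by norm_num, Real.log_pow]; push_cast; ring
    linarith
  have hkcast : ((2 * (9 * (Nat.clog 2 (Nat.clog 2 n + 1) + 4)) : ℕ):ℝ)
      = 18 * (Nat.clog 2 (Nat.clog 2 n + 1):ℝ) + 72 := by push_cast; ring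
  have hk : ((2 * (9 * (Nat.clog 2 (Nat.clog 2 n + 1) + 4)) : ℕ):ℝ)
      ≤ 36 * Real.log (Real.log n) + 141 := by
    rw [hkcast]; linarith
  have e2 : Real.log n * η ≤ L := by
    rw [hL]; exact mul_le_mul_of_nonneg_left hlln (by linarith)
  have hP1 : ((Nat.clog 2 n + 1 : ℕ):ℝ) *
      (((2 * (9 * (Nat.clog 2 (Nat.clog 2 n + 1) + 4)) : ℕ):ℝ) * T)
      ≤ (144 + 564/η) * (L * T) := by
    have e1 : ((Nat.clog 2 n + 1 : ℕ):ℝ) *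
        (((2 * (9 * (Nat.clog 2 (Nat.clog 2 n + 1) + 4)) : ℕ):ℝ) * T)
        ≤ (4 * Real.log n) * ((36 * Real.log (Real.log n) + 141) * T) := by
      apply mul_le_mul hS1 (mul_le_mul_of_nonneg_right hk hT0)
        (mul_nonneg (Nat.cast_nonneg _) hT0) (by positivity)
    have e3 : (4 * Real.log n) * ((36 * Real.log (Real.log n) + 141) * T)
        = 144 * (L * T) + 564 * (Real.log n * T) := by rw [hL]; ring
    have e4 : 564 * (Real.log n * T) ≤ (564/η) * (L * T) := by
      rw [div_mul_eq_mul_div, le_div_iff₀ hη]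
      nlinarith [mul_le_mul_of_nonneg_right e2 hT0]
    calc _ ≤ (4 * Real.log n) * ((36 * Real.log (Real.log n) + 141) * T) := e1
      _ = 144 * (L * T) + 564 * (Real.log n * T) := e3
      _ ≤ 144 * (L * T) + (564/η) * (L * T) := by linarith
      _ = (144 + 564/η) * (L * T) := by ring
  have hP2 : (b:ℝ) + 2 ≤ (C/η) * L + (2/(l3*η)) * L := by
    have hbL : (b:ℝ) ≤ (C/η) * L := by
      calc (b:ℝ) ≤ C * Real.log n := hb
        _ ≤ (C/η) * L := by
            rw [div_mul_eq_mul_div, le_div_iff₀ hη]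
            nlinarith [e2]
    have h2L : (2:ℝ) ≤ (2/(l3*η)) * L := by
      rw [div_mul_eq_mul_div, le_div_iff₀ (by positivity)]
      linarith
    linarith
  have h1L : (1:ℝ) ≤ (1/(l3*η)) * L := by
    rw [div_mul_eq_mul_div, le_div_iff₀ (by positivity)]
    linarith
  have hLT : L ≤ L * T := le_mul_of_one_le_right (le_of_lt hL0) hT
  calc (10/9) * (((Nat.clog 2 n + 1 : ℕ) : ℝ) *
          (((2 * (9 * (Nat.clog 2 (Nat.clog 2 n + 1) + 4)) : ℕ) : ℝ) * T) + ((b:ℝ) + 2)) + 1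
      ≤ (10/9) * ((144 + 564/η) * (L * T) + ((C/η) * L + (2/(l3*η)) * L))
          + (1/(l3*η)) * L := by
        have := add_le_add hP1 hP2
        have h9 := mul_le_mul_of_nonneg_left this (by norm_num : (0:ℝ) ≤ 10/9)
        linarith
    _ ≤ (10/9) * ((144 + 564/η) * (L * T) + ((C/η) * (L * T) + (2/(l3*η)) * (L * T)))
          + (1/(l3*η)) * (L * T) := by
        gcongr
    _ = ((10/9) * (144 + 564/η + C/η + 2/(l3*η)) + 1/(l3*η)) * T * L := by ring

theorem L_pos (n : ℕ) (hn : 3 ≤ n) : 0 < Real.log n * Real.log (Real.log n) := by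
  have hl3 : (1:ℝ) < Real.log 3 := by
    have h := Real.exp_one_lt_d9
    rw [show (1:ℝ) = Real.log (Real.exp 1) from (Real.log_exp 1).symm]
    exact Real.log_lt_log (Real.exp_pos 1) (by linarith)
  have hln : Real.log 3 ≤ Real.log n := Real.log_le_log (by norm_num) (by exact_mod_cast hn)
  have h1 : 1 < Real.log n := lt_of_lt_of_le hl3 hln
  have h2 : 0 < Real.log (Real.log n) := Real.log_pos h1
  exact mul_pos (by linarith) h2

/-- **Bounded-error communication lower bound via the sabotaged problem.** For every
`b = O(log n)` (i.e., for every constant `C > 0` there is `c > 0` such that whenever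
`b ≤ C log n`), every `n`-bit partial Boolean function `f` satisfies
`R^cc(f ∘ G_b) = Ω(R₀^cc(f_usab ∘ G'_b) / (log n · log log n))`, where `G'_b` is the
index gadget whose array alphabet is `{0, 1, *, †}`. -/
theorem communication_sabotage (C : ℝ) (hC : 0 < C) :
    ∃ c : ℝ, 0 < c ∧ ∀ (n b : ℕ) (f : PFn (Fin n) Bool Bool),
      (b : ℝ) ≤ C * Real.log n →
      c * (R0cc (gcomp (fusab f) (IndG b Sab)) /
          (Real.log n * Real.log (Real.log n))) ≤
        Rcc (gcomp f (IndG b Bool)) := by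
  
  classical
  obtain ⟨K, hK, hbound⟩ := arith_main C hC
  refine ⟨1/K, by positivity, ?_⟩
  intro n b f hb
  have hR0nn : 0 ≤ R0cc (gcomp (fusab f) (IndG b Sab)) := R0cc_nonneg _
  have hK0 : (0:ℝ) ≤ 1/K := by positivity
  by_cases hn3 : 3 ≤ n
  · -- main case
    apply le_csInf ⟨_, Rcc_mem (b := b) f⟩
    intro T hT
    by_cases hne : ∃ x y z, gcomp (fusab f) (IndG b Sab) x y = some z
    · obtain ⟨x0, y0, z0', hxy⟩ := hne
      obtain ⟨i0, zz0, hspec, huniq, hz, hval'⟩ := fusab_structure f (pOf x0 y0) z0' hxy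
      -- two inputs of the lifted problem with different values
      have hFA : ∀ v : Fin n → Bool,
          gcomp f (IndG b Bool) (fun _ _ => false) (fun i _ => v i) = f v := fun v => rfl
      have hvalF : gcomp f (IndG b Bool) (fun _ _ => false)
          (fun i _ => cmpl (pOf x0 y0) (fun _ => false) i) = some zz0 := by
        rw [hFA, hval' (fun _ => false)]
        simp
      have hvalT : gcomp f (IndG b Bool) (fun _ _ => false)
          (fun i _ => cmpl (pOf x0 y0) (fun _ => true) i) = some (!zz0) := by
        rw [hFA, hval' (fun _ => true)]
        simp
      have hT1 : 1 ≤ T := by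
        cases hzz : zz0
        · rw [hzz] at hvalF hvalT
          exact one_le_of_mem (gcomp f (IndG b Bool)) _ _ _ _ hvalF hvalT T hT
        · rw [hzz] at hvalF hvalT
          exact one_le_of_mem (gcomp f (IndG b Bool)) _ _ _ _ hvalT hvalF T hT
      obtain ⟨hT0, P, hPc, hPw⟩ := hT
      obtain ⟨Q, hQc, hQe⟩ := build_Q n b f T (by linarith) P hPc hPw
      set Texp : ℝ := (10/9) * (((Nat.clog 2 n + 1 : ℕ) : ℝ) *
          (((2 * (9 * (Nat.clog 2 (Nat.clog 2 n + 1) + 4)) : ℕ) : ℝ) * T) + ((b:ℝ) + 2)) + 1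
        with hTexp
      have hTexp0 : 0 ≤ Texp := by
        rw [hTexp]
        have h1 : (0:ℝ) ≤ ((Nat.clog 2 n + 1 : ℕ) : ℝ) *
            (((2 * (9 * (Nat.clog 2 (Nat.clog 2 n + 1) + 4)) : ℕ) : ℝ) * T) :=
          mul_nonneg (Nat.cast_nonneg _) (mul_nonneg (Nat.cast_nonneg _) (by linarith))
        have h2 : (0:ℝ) ≤ (b:ℝ) + 2 := by positivity
        linarith
      have hR0le : R0cc (gcomp (fusab f) (IndG b Sab)) ≤ Texp :=
        csInf_le ⟨0, fun t ht => ht.1⟩ ⟨hTexp0, Q, hQc, hQe⟩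
      have harith : Texp ≤ K * T * (Real.log n * Real.log (Real.log n)) :=
        hbound n b T hn3 hb hT1
      have hL0 : 0 < Real.log n * Real.log (Real.log n) := L_pos n hn3
      have hdiv : R0cc (gcomp (fusab f) (IndG b Sab)) /
          (Real.log n * Real.log (Real.log n)) ≤ K * T := by
        rw [div_le_iff₀ hL0]
        calc R0cc (gcomp (fusab f) (IndG b Sab)) ≤ Texp := hR0le
          _ ≤ K * T * (Real.log n * Real.log (Real.log n)) := harith
      calc (1/K) * (R0cc (gcomp (fusab f) (IndG b Sab)) /
            (Real.log n * Real.log (Real.log n)))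
          ≤ (1/K) * (K * T) := mul_le_mul_of_nonneg_left hdiv hK0
        _ = T := by field_simp
    · -- empty domain: R0cc = 0
      have hmem0 : (0:ℝ) ∈ {T : ℝ | 0 ≤ T ∧ ∃ Q : RandProt (XA n b) (YS n b) Bool,
          Q.Computes (gcomp (fusab f) (IndG b Sab)) 0 ∧
          Q.ECostLe (gcomp (fusab f) (IndG b Sab)) T} := by
        refine ⟨le_refl 0, detRP (Prot.leaf false), ?_, ?_⟩
        · intro x y z h
          exact absurd ⟨x, y, z, h⟩ hne
        · intro x y h
          obtain ⟨z, hz⟩ := Option.isSome_iff_exists.mp h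
          exact absurd ⟨x, y, z, hz⟩ hne
      have hle0 : R0cc (gcomp (fusab f) (IndG b Sab)) ≤ 0 :=
        csInf_le ⟨0, fun t ht => ht.1⟩ hmem0
      have hz0 : R0cc (gcomp (fusab f) (IndG b Sab)) = 0 := le_antisymm hle0 hR0nn
      rw [hz0]
      simp only [zero_div, mul_zero]
      exact hT.1
  · -- small n
    interval_cases n
    · simpa [Real.log_zero] using Rcc_nonneg (gcomp f (IndG b Bool))
    · simpa [Real.log_one] using Rcc_nonneg (gcomp f (IndG b Bool))
    · have hl2pos : (0:ℝ) < Real.log 2 := Real.log_pos (by norm_num)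
      have hl2lt : Real.log 2 < 1 := by
        have := Real.log_two_lt_d9; linarith
      have hneg : Real.log (Real.log 2) < 0 := Real.log_neg hl2pos hl2lt
      have hden : Real.log 2 * Real.log (Real.log 2) < 0 :=
        mul_neg_of_pos_of_neg hl2pos hneg
      have hdivle : R0cc (gcomp (fusab f) (IndG b Sab)) /
          (Real.log 2 * Real.log (Real.log 2)) ≤ 0 :=
        div_nonpos_of_nonneg_of_nonpos hR0nn (le_of_lt hden)
      calc (1/K) * (R0cc (gcomp (fusab f) (IndG b Sab)) /
            (Real.log ((2:ℕ):ℝ) * Real.log (Real.log ((2:ℕ):ℝ))))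
          ≤ 0 := by
            push_cast
            calc (1/K) * (R0cc (gcomp (fusab f) (IndG b Sab)) /
                  (Real.log 2 * Real.log (Real.log 2)))
                ≤ (1/K) * 0 := mul_le_mul_of_nonneg_left hdivle hK0
              _ = 0 := mul_zero _
        _ ≤ Rcc (gcomp f (IndG b Bool)) := Rcc_nonneg _
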